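/- arXiv:1810.06186 — 9 statements merged into one kernel-verified Lean document; each statement's English description precedes it below -/
import Mathlib

section
/- Fix an integer q ≥ 1, and let G be the graph whose vertex set is partitioned into five cliques Q_1, …, Q_5, each of size q, such that for each i mod 5 every vertex in Q_i is adjacent to every vertex in Q_{i+1} ∪ Q_{i-1} and to no vertex in Q_{i+2} ∪ Q_{i-2}. Then G is (P5, gem)-free, ω(G) = 2q, Δ(G) = 3q − 1, G has no stable set of size 3, and hence χ(G) ≥ ⌈5q/2⌉. -/
open SimpleGraph

/-- The gem: a path 0-1-2-3 on 4 vertices plus a fifth vertex 4 adjacent to all of them. -/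
def gem : SimpleGraph (Fin 5) :=
  SimpleGraph.fromEdgeSet {s(0,1), s(1,2), s(2,3), s(4,0), s(4,1), s(4,2), s(4,3)}

/-- `G` is `H`-free: no induced subgraph of `G` is isomorphic to `H`. -/
def InducedFree {W V : Type*} (H : SimpleGraph W) (G : SimpleGraph V) : Prop :=
  ¬ Nonempty (H ↪g G)

/-- `G` is (P5, gem)-free. -/
def P5GemFree {V : Type*} (G : SimpleGraph V) : Prop :=
  InducedFree (SimpleGraph.pathGraph 5) G ∧ InducedFree gem G

/-- The C5-blow-up adjacency relation on the cyclic index set. -/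
def relc (a b : Fin 5) : Prop := a = b ∨ b = a + 1 ∨ a = b + 1

instance : DecidableRel relc := fun a b => by unfold relc; infer_instance

instance : DecidableRel (SimpleGraph.pathGraph 5).Adj := fun a b =>
  decidable_of_iff _ SimpleGraph.pathGraph_adj.symm

lemma gem_adj_iff (i j : Fin 5) : gem.Adj i j ↔
    (s(i,j) ∈ ({s(0,1), s(1,2), s(2,3), s(4,0), s(4,1), s(4,2), s(4,3)} :
      Finset (Sym2 (Fin 5))) ∧ i ≠ j) := by
  rw [gem, SimpleGraph.fromEdgeSet_adj]
  simp [Set.mem_insert_iff, Finset.mem_insert]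

instance : DecidableRel gem.Adj := fun i j =>
  decidable_of_iff _ (gem_adj_iff i j).symm

lemma no_path_map : ∀ a b c d e : Fin 5, ¬ ∀ i j : Fin 5, i ≠ j →
    ((SimpleGraph.pathGraph 5).Adj i j ↔
      relc (![a,b,c,d,e] i) (![a,b,c,d,e] j)) := by decide

lemma no_gem_map : ∀ a b c d e : Fin 5, ¬ ∀ i j : Fin 5, i ≠ j →
    (gem.Adj i j ↔ relc (![a,b,c,d,e] i) (![a,b,c,d,e] j)) := by decide

lemma vec_eval (g : Fin 5 → Fin 5) : ∀ i, ![g 0, g 1, g 2, g 3, g 4] i = g i := by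
  intro i; fin_cases i <;> rfl

lemma no_map_path (g : Fin 5 → Fin 5) : ¬ ∀ i j : Fin 5, i ≠ j →
    ((SimpleGraph.pathGraph 5).Adj i j ↔ relc (g i) (g j)) := fun h =>
  no_path_map (g 0) (g 1) (g 2) (g 3) (g 4) (fun i j hij => by
    rw [vec_eval, vec_eval]; exact h i j hij)

lemma no_map_gem (g : Fin 5 → Fin 5) : ¬ ∀ i j : Fin 5, i ≠ j →
    (gem.Adj i j ↔ relc (g i) (g j)) := fun h =>
  no_gem_map (g 0) (g 1) (g 2) (g 3) (g 4) (fun i j hij => by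
    rw [vec_eval, vec_eval]; exact h i j hij)

lemma three_distinct (a b c : Fin 5) (hab : a ≠ b) (hac : a ≠ c) (hbc : b ≠ c) :
    relc a b ∨ relc a c ∨ relc b c := by revert a b c; decide

lemma clique_fin (T : Finset (Fin 5)) (h : ∀ a ∈ T, ∀ b ∈ T, relc a b) :
    ∃ i : Fin 5, ∀ a ∈ T, a = i ∨ a = i + 1 := by revert T; decide

lemma fin5_distinct (x : Fin 5) : x ≠ x + 1 ∧ x ≠ x - 1 ∧ x + 1 ≠ x - 1 := by
  revert x; decide

/-- The tightness example: a graph `G` whose vertex set is partitioned (by `f`) into five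
cliques `Q_0, …, Q_4`, each of size `q ≥ 1`, where each `Q_i` is complete to
`Q_{i+1} ∪ Q_{i-1}` and anticomplete to `Q_{i+2} ∪ Q_{i-2}` (indices mod 5).
Then `G` is (P5, gem)-free, `ω(G) = 2q`, `Δ(G) = 3q - 1`, `G` has no stable set of size 3,
and hence `χ(G) ≥ ⌈5q/2⌉`. -/
theorem tightness_example {V : Type*} [Fintype V] (q : ℕ) (hq : 1 ≤ q)
    (G : SimpleGraph V) [DecidableRel G.Adj] (f : V → Fin 5)
    (hcard : ∀ i : Fin 5, Nat.card {v : V // f v = i} = q)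
    (hadj : ∀ u v : V, G.Adj u v ↔
      u ≠ v ∧ (f u = f v ∨ f v = f u + 1 ∨ f u = f v + 1)) :
    P5GemFree G ∧ G.cliqueNum = 2 * q ∧ G.maxDegree = 3 * q - 1 ∧
      (¬ ∃ S : Finset V, S.card = 3 ∧ ∀ u ∈ S, ∀ v ∈ S, u ≠ v → ¬ G.Adj u v) ∧
      ((5 * q ⌈/⌉ 2 : ℕ) : ℕ∞) ≤ G.chromaticNumber := by
  classical
  -- adjacency restated via `relc`
  have hadj' : ∀ u v : V, G.Adj u v ↔ u ≠ v ∧ relc (f u) (f v) := hadj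
  -- fibers
  set Fib : Fin 5 → Finset V := fun i => Finset.univ.filter (fun v => f v = i) with hFibdef
  have hFib : ∀ i, (Fib i).card = q := by
    intro i
    rw [hFibdef]
    rw [← Fintype.card_subtype, ← Nat.card_eq_fintype_card]
    exact hcard i
  have hdisj : ∀ i j : Fin 5, i ≠ j → Disjoint (Fib i) (Fib j) := by
    intro i j hij
    rw [Finset.disjoint_left]
    intro a ha hb
    simp only [hFibdef, Finset.mem_filter] at ha hb
    exact hij (ha.2 ▸ hb.2)
  have cardV : Fintype.card V = 5 * q := by
    rw [← Finset.card_univ,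
      Finset.card_eq_sum_card_fiberwise (f := f) (t := Finset.univ) (fun x _ => Finset.mem_univ _)]
    have hFib' : ∀ i, (Finset.univ.filter (fun v => f v = i)).card = q := hFib
    simp only [hFib', Finset.sum_const, Finset.card_univ, smul_eq_mul]
    simp
  have hne : Nonempty V := by
    rw [← Fintype.card_pos_iff, cardV]; omega
  obtain ⟨v0⟩ := hne
  -- no stable set of size 3
  have hstab : ¬ ∃ S : Finset V, S.card = 3 ∧ ∀ u ∈ S, ∀ v ∈ S, u ≠ v → ¬ G.Adj u v := by
    rintro ⟨S, hS3, hS⟩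
    obtain ⟨u, v, w, huv, huw, hvw, rfl⟩ := Finset.card_eq_three.mp hS3
    have key : ∀ a b : V, a ≠ b → (¬ G.Adj a b) → ¬ relc (f a) (f b) := by
      intro a b hab hnadj hr
      exact hnadj ((hadj' a b).mpr ⟨hab, hr⟩)
    have h1 := key u v huv (hS u (by simp) v (by simp) huv)
    have h2 := key u w huw (hS u (by simp) w (by simp) huw)
    have h3 := key v w hvw (hS v (by simp) w (by simp) hvw)
    have fuv : f u ≠ f v := fun h => h1 (Or.inl h)
    have fuw : f u ≠ f w := fun h => h2 (Or.inl h)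
    have fvw : f v ≠ f w := fun h => h3 (Or.inl h)
    rcases three_distinct (f u) (f v) (f w) fuv fuw fvw with h | h | h
    · exact h1 h
    · exact h2 h
    · exact h3 h
  -- (P5, gem)-free
  have embmap : ∀ (H : SimpleGraph (Fin 5)), (H ↪g G) →
      ∃ g : Fin 5 → Fin 5, ∀ i j : Fin 5, i ≠ j → (H.Adj i j ↔ relc (g i) (g j)) := by
    intro H φ
    refine ⟨fun i => f (φ i), fun i j hij => ?_⟩
    constructor
    · intro h
      exact ((hadj' _ _).mp (φ.map_adj_iff.mpr h)).2
    · intro h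
      exact φ.map_adj_iff.mp ((hadj' _ _).mpr ⟨fun he => hij (φ.injective he), h⟩)
  have hfree : P5GemFree G := by
    constructor
    · rintro ⟨φ⟩
      obtain ⟨g, hg⟩ := embmap _ φ
      exact no_map_path g hg
    · rintro ⟨φ⟩
      obtain ⟨g, hg⟩ := embmap _ φ
      exact no_map_gem g hg
  -- clique number
  have hclique01 : G.IsClique ((Fib 0 ∪ Fib 1 : Finset V) : Set V) := by
    intro u hu v hv huv
    simp only [Finset.coe_union, Set.mem_union, hFibdef, Finset.coe_filter,
      Set.mem_setOf_eq, Finset.mem_univ, true_and] at hu hv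
    rw [hadj' u v]
    refine ⟨huv, ?_⟩
    rcases hu with h | h <;> rcases hv with h' | h' <;>
      simp only [relc, h, h'] <;> decide
  have hcard01 : (Fib 0 ∪ Fib 1 : Finset V).card = 2 * q := by
    rw [Finset.card_union_of_disjoint (hdisj 0 1 (by decide)), hFib, hFib]
    ring
  have hcliqueNum : G.cliqueNum = 2 * q := by
    apply le_antisymm
    · show sSup {n | ∃ s, G.IsNClique n s} ≤ 2 * q
      refine csSup_le ?_ ?_
      · exact ⟨0, ⟨∅, SimpleGraph.isNClique_empty.mpr rfl⟩⟩
      rintro n ⟨s, hs⟩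
      have hT : ∀ a ∈ s.image f, ∀ b ∈ s.image f, relc a b := by
        intro a ha b hb
        obtain ⟨u, hu, rfl⟩ := Finset.mem_image.mp ha
        obtain ⟨v, hv, rfl⟩ := Finset.mem_image.mp hb
        by_cases huv : u = v
        · subst huv; exact Or.inl rfl
        · exact ((hadj' u v).mp (hs.isClique hu hv huv)).2
      obtain ⟨i, hi⟩ := clique_fin (s.image f) hT
      have hsub : s ⊆ Fib i ∪ Fib (i + 1) := by
        intro u hu
        rcases hi (f u) (Finset.mem_image_of_mem f hu) with h | h <;>
          simp [hFibdef, Finset.mem_union, h]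
      calc n = s.card := hs.card_eq.symm
        _ ≤ (Fib i ∪ Fib (i + 1)).card := Finset.card_le_card hsub
        _ ≤ (Fib i).card + (Fib (i + 1)).card := Finset.card_union_le _ _
        _ = 2 * q := by rw [hFib, hFib]; ring
    · have := hclique01.card_le_cliqueNum
      rwa [hcard01] at this
  -- degrees
  have hdeg : ∀ v : V, G.degree v = 3 * q - 1 := by
    intro v
    have hnb : G.neighborFinset v =
        ((Fib (f v) ∪ Fib (f v + 1) ∪ Fib (f v - 1)).erase v) := by
      ext u
      simp only [SimpleGraph.mem_neighborFinset, hadj, Finset.mem_erase,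
        Finset.mem_union, hFibdef, Finset.mem_filter, Finset.mem_univ, true_and]
      constructor
      · rintro ⟨hvu, h | h | h⟩
        · exact ⟨hvu.symm, Or.inl (Or.inl h.symm)⟩
        · exact ⟨hvu.symm, Or.inl (Or.inr h)⟩
        · exact ⟨hvu.symm, Or.inr (eq_sub_iff_add_eq.mpr h.symm)⟩
      · rintro ⟨huv, (h | h) | h⟩
        · exact ⟨huv.symm, Or.inl h.symm⟩
        · exact ⟨huv.symm, Or.inr (Or.inl h)⟩
        · exact ⟨huv.symm, Or.inr (Or.inr (eq_sub_iff_add_eq.mp h).symm)⟩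
    obtain ⟨d1, d2, d3⟩ := fin5_distinct (f v)
    have hcard3 : (Fib (f v) ∪ Fib (f v + 1) ∪ Fib (f v - 1)).card = 3 * q := by
      rw [Finset.card_union_of_disjoint, Finset.card_union_of_disjoint (hdisj _ _ d1),
        hFib, hFib, hFib]
      · ring
      · rw [Finset.disjoint_union_left]
        exact ⟨hdisj _ _ d2, hdisj _ _ d3⟩
    have hvmem : v ∈ Fib (f v) ∪ Fib (f v + 1) ∪ Fib (f v - 1) := by
      simp [hFibdef, Finset.mem_union]
    rw [SimpleGraph.degree, hnb, Finset.card_erase_of_mem hvmem, hcard3]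
  have hmax : G.maxDegree = 3 * q - 1 := by
    apply le_antisymm
    · exact G.maxDegree_le_of_forall_degree_le _ (fun v => le_of_eq (hdeg v))
    · rw [← hdeg v0]
      exact G.degree_le_maxDegree v0
  -- chromatic number
  have hchrom : ((5 * q ⌈/⌉ 2 : ℕ) : ℕ∞) ≤ G.chromaticNumber := by
    rw [SimpleGraph.chromaticNumber]
    refine le_iInf₂ fun n hn => ?_
    rw [Nat.cast_le]
    obtain ⟨C⟩ := hn
    have hfib : ∀ c : Fin n, (Finset.univ.filter (fun v => C v = c)).card ≤ 2 := by
      intro c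
      by_contra hgt
      push_neg at hgt
      obtain ⟨S, hSsub, hS3⟩ := Finset.exists_subset_card_eq (n := 3) hgt
      apply hstab
      refine ⟨S, hS3, fun u hu v hv huv hA => ?_⟩
      have hu' := Finset.mem_filter.mp (hSsub hu)
      have hv' := Finset.mem_filter.mp (hSsub hv)
      exact C.valid hA (hu'.2.trans hv'.2.symm)
    have hcardle : Fintype.card V ≤ 2 * n := by
      rw [← Finset.card_univ,
        Finset.card_eq_sum_card_fiberwise (f := C) (t := Finset.univ)
          (fun x _ => Finset.mem_univ _)]
      calc ∑ c : Fin n, (Finset.univ.filter (fun v => C v = c)).card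
          ≤ ∑ _c : Fin n, 2 := Finset.sum_le_sum (fun c _ => hfib c)
        _ = 2 * n := by simp [Finset.sum_const, Finset.card_univ, Nat.mul_comm]
    rw [cardV] at hcardle
    rw [Nat.ceilDiv_eq_add_pred_div]
    omega
  exact ⟨hfree, hcliqueNum, hmax, hstab, hchrom⟩
end

section
/- Let H be a (P5, gem)-free graph and let G be a P4-free expansion of H. Then G is (P5, gem)-free. -/
open SimpleGraph

instance instDecPath (n : ℕ) : DecidableRel (pathGraph n).Adj :=
  fun _ _ => decidable_of_iff _ pathGraph_adj.symm

instance instDecGem : DecidableRel gem.Adj := fun u v =>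
  decidable_of_iff ((s(u,v) = s(0,1) ∨ s(u,v) = s(1,2) ∨ s(u,v) = s(2,3) ∨ s(u,v) = s(4,0) ∨
      s(u,v) = s(4,1) ∨ s(u,v) = s(4,2) ∨ s(u,v) = s(4,3)) ∧ u ≠ v) (by
    show _ ↔ gem.Adj u v
    rw [gem, fromEdgeSet_adj]
    simp [Set.mem_insert_iff])

/-- The key combinatorial lemma, abstracted over `P ∈ {P5, gem}`. -/
lemma helper_free {V W : Type*} (H : SimpleGraph W) (G : SimpleGraph V)
    (f : V → W)
    (hcross : ∀ u v : V, f u ≠ f v → (G.Adj u v ↔ H.Adj (f u) (f v)))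
    (hfiber : ∀ w : W, InducedFree (SimpleGraph.pathGraph 4) (G.induce {v | f v = w}))
    (P : SimpleGraph (Fin 5))
    (hmod : ∀ s : Finset (Fin 5), ∀ i0 ∈ s, ∀ j0 ∈ s, i0 ≠ j0 →
      (∀ k ∉ s, ∀ a ∈ s, (P.Adj k a ↔ P.Adj k i0)) →
      ∃ ι : Fin 4 → Fin 5, Function.Injective ι ∧ (∀ a, ι a ∈ s) ∧
        (∀ a b, ((pathGraph 4).Adj a b ↔ P.Adj (ι a) (ι b))))
    (hPH : InducedFree P H) : InducedFree P G := by
  classical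
  rintro ⟨e⟩
  set g : Fin 5 → W := fun k => f (e k) with hg
  by_cases hinj : Function.Injective g
  · -- build an embedding of P into H
    refine hPH ⟨⟨⟨g, hinj⟩, ?_⟩⟩
    intro a b
    simp only [Function.Embedding.coeFn_mk]
    by_cases hab : a = b
    · subst hab; simp [P.irrefl]
    · have hne : g a ≠ g b := fun h => hab (hinj h)
      rw [← hcross (e a) (e b) hne, e.map_adj_iff]
  · -- two vertices in the same fiber; the fiber class is a module
    rw [Function.not_injective_iff] at hinj
    obtain ⟨i0, j0, hgij, hij⟩ := hinj
    set s : Finset (Fin 5) := Finset.univ.filter (fun k => g k = g i0) with hs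
    have hi0 : i0 ∈ s := by simp [hs]
    have hj0 : j0 ∈ s := by simp [hs, hgij]
    have hmem : ∀ k, k ∈ s ↔ g k = g i0 := by intro k; simp [hs]
    obtain ⟨ι, hιinj, hιs, hιadj⟩ := hmod s i0 hi0 j0 hj0 hij (by
      intro k hk a ha
      have hka : g k ≠ g a := by
        rw [(hmem a).1 ha]; exact fun h => hk ((hmem k).2 h)
      have hki : g k ≠ g i0 := fun h => hk ((hmem k).2 h)
      rw [← e.map_adj_iff, ← e.map_adj_iff]
      show G.Adj (e k) (e a) ↔ G.Adj (e k) (e i0)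
      rw [hcross (e k) (e a) hka, hcross (e k) (e i0) hki]
      show H.Adj (g k) (g a) ↔ H.Adj (g k) (g i0)
      rw [(hmem a).1 ha])
    -- the image of ι lies in the fiber of g i0 and forms an induced P4 there
    have hall : ∀ a : Fin 4, f (e (ι a)) = g i0 := fun a => (hmem (ι a)).1 (hιs a)
    refine hfiber (g i0) ⟨⟨⟨fun a => ⟨e (ι a), hall a⟩, ?_⟩, ?_⟩⟩
    · intro a b hab
      exact hιinj (e.injective (congrArg Subtype.val hab))
    · intro a b
      simp only [Function.Embedding.coeFn_mk, comap_adj, Function.Embedding.coe_subtype,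
        e.map_adj_iff]
      show G.Adj (e (ι a)) (e (ι b)) ↔ _
      rw [e.map_adj_iff]
      exact (hιadj a b).symm

set_option synthInstance.maxSize 400 in
set_option maxHeartbeats 1000000 in
/-- Any P4-free expansion `G` of a (P5, gem)-free graph `H` is (P5, gem)-free. The expansion is
given by a surjection `f : V → W`; its fibers `Q_w = f⁻¹(w)` are the (non-empty) expansion sets,
each inducing a P4-free graph, and for vertices in distinct fibers adjacency in `G` is governed
by adjacency in `H`. -/
theorem p4FreeExpansion_p5GemFree {V W : Type*} [Fintype V] [Fintype W]
    (H : SimpleGraph W) (G : SimpleGraph V) (hH : P5GemFree H)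
    (f : V → W) (hsurj : Function.Surjective f)
    (hcross : ∀ u v : V, f u ≠ f v → (G.Adj u v ↔ H.Adj (f u) (f v)))
    (hfiber : ∀ w : W, InducedFree (SimpleGraph.pathGraph 4) (G.induce {v | f v = w})) :
    P5GemFree G := by
  constructor
  · exact helper_free H G f hcross hfiber (pathGraph 5) (by decide) hH.1
  · exact helper_free H G f hcross hfiber gem (by decide) hH.2
end

section
/- With the standard setup, every vertex of G lies in A_1 ∪ ⋯ ∪ A_5 ∪ Y_1 ∪ ⋯ ∪ Y_5 ∪ R; that is, V(G) = A ∪ Y_1 ∪ ⋯ ∪ Y_5 ∪ R. -/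
open SimpleGraph

/-- `X` is complete to `Y`: every vertex of `X` is adjacent to every vertex of `Y`. -/
def CompleteTo {V : Type*} (G : SimpleGraph V) (X Y : Set V) : Prop :=
  ∀ x ∈ X, ∀ y ∈ Y, G.Adj x y

/-- `X` is anticomplete to `Y`: no vertex of `X` is adjacent to any vertex of `Y`. -/
def AnticompleteTo {V : Type*} (G : SimpleGraph V) (X Y : Set V) : Prop :=
  ∀ x ∈ X, ∀ y ∈ Y, ¬ G.Adj x y

/-- `X` is a homogeneous set: every vertex outside `X` with a neighbor in `X` is
complete to `X`. -/
def IsHomogeneousSet {V : Type*} (G : SimpleGraph V) (X : Set V) : Prop :=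
  ∀ v ∉ X, (∃ x ∈ X, G.Adj v x) → ∀ x ∈ X, G.Adj v x

/-- Five nonempty pairwise disjoint sets `A 0, …, A 4` such that (indices mod 5) each `A i` is
complete to `A (i-1) ∪ A (i+1)` and anticomplete to `A (i-2) ∪ A (i+2)`. -/
structure IsC5Partition {V : Type*} (G : SimpleGraph V) (A : Fin 5 → Set V) : Prop where
  nonempty : ∀ i, (A i).Nonempty
  disjoint : ∀ i j, i ≠ j → Disjoint (A i) (A j)
  complete_succ : ∀ i, CompleteTo G (A i) (A (i + 1))
  complete_pred : ∀ i, CompleteTo G (A i) (A (i - 1))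
  anticomplete_succ : ∀ i, AnticompleteTo G (A i) (A (i + 2))
  anticomplete_pred : ∀ i, AnticompleteTo G (A i) (A (i - 2))

/-- The set `Y_i`: vertices outside `A` that are complete to `A i`, anticomplete to
`A (i-1) ∪ A (i+1)`, have a neighbor in each of `A (i-2)` and `A (i+2)`, and are complete
to at least one of `A (i-2)`, `A (i+2)`. -/
def Yset {V : Type*} (G : SimpleGraph V) (A : Fin 5 → Set V) (i : Fin 5) : Set V :=
  {x | x ∉ (⋃ j, A j) ∧ (∀ a ∈ A i, G.Adj x a) ∧
    (∀ a ∈ A (i - 1), ¬ G.Adj x a) ∧ (∀ a ∈ A (i + 1), ¬ G.Adj x a) ∧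
    (∃ a ∈ A (i - 2), G.Adj x a) ∧ (∃ a ∈ A (i + 2), G.Adj x a) ∧
    ((∀ a ∈ A (i - 2), G.Adj x a) ∨ (∀ a ∈ A (i + 2), G.Adj x a))}

/-- The set `R`: vertices outside `A = ⋃ A i` with no neighbor in `A`. -/
def Rset {V : Type*} (G : SimpleGraph V) (A : Fin 5 → Set V) : Set V :=
  {x | x ∉ (⋃ j, A j) ∧ ∀ a ∈ ⋃ j, A j, ¬ G.Adj x a}

/-- A vertex of `Y_i` is pure if it is complete to `A (i-2) ∪ A (i+2)`. -/
def IsPureVertex {V : Type*} (G : SimpleGraph V) (A : Fin 5 → Set V) (i : Fin 5) (x : V) : Prop :=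
  (∀ a ∈ A (i - 2), G.Adj x a) ∧ (∀ a ∈ A (i + 2), G.Adj x a)


section Aux

lemma p5_emb_aux {V : Type*} (G : SimpleGraph V) (v0 v1 v2 v3 v4 : V)
    (h01 : G.Adj v0 v1) (h12 : G.Adj v1 v2) (h23 : G.Adj v2 v3) (h34 : G.Adj v3 v4)
    (h02 : ¬ G.Adj v0 v2) (h03 : ¬ G.Adj v0 v3) (h04 : ¬ G.Adj v0 v4)
    (h13 : ¬ G.Adj v1 v3) (h14 : ¬ G.Adj v1 v4) (h24 : ¬ G.Adj v2 v4) :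
    Nonempty (SimpleGraph.pathGraph 5 ↪g G) := by
  have n01 : v0 ≠ v1 := h01.ne
  have n12 : v1 ≠ v2 := h12.ne
  have n23 : v2 ≠ v3 := h23.ne
  have n34 : v3 ≠ v4 := h34.ne
  have n02 : v0 ≠ v2 := fun h => h03 (h.symm ▸ h23)
  have n03 : v0 ≠ v3 := fun h => h04 (h.symm ▸ h34)
  have n04 : v0 ≠ v4 := fun h => h14 (h ▸ h01.symm)
  have n13 : v1 ≠ v3 := fun h => h14 (h.symm ▸ h34)
  have n14 : v1 ≠ v4 := fun h => h24 (h ▸ h12).symm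
  have n24 : v2 ≠ v4 := fun h => h14 (h ▸ h12)
  refine ⟨⟨⟨![v0,v1,v2,v3,v4], ?_⟩, ?_⟩⟩
  · intro a b hab
    have n10 := n01.symm; have n21 := n12.symm; have n32 := n23.symm
    have n43 := n34.symm; have n20 := n02.symm; have n30 := n03.symm
    have n40 := n04.symm; have n31 := n13.symm; have n41 := n14.symm
    have n42 := n24.symm
    fin_cases a <;> fin_cases b <;> simp_all <;> try decide
  · intro a b
    change G.Adj (![v0,v1,v2,v3,v4] a) (![v0,v1,v2,v3,v4] b) ↔ _
    have h10 := h01.symm; have h21 := h12.symm; have h32 := h23.symm; have h43 := h34.symm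
    have h20 : ¬ G.Adj v2 v0 := fun h => h02 h.symm
    have h30 : ¬ G.Adj v3 v0 := fun h => h03 h.symm
    have h40 : ¬ G.Adj v4 v0 := fun h => h04 h.symm
    have h31 : ¬ G.Adj v3 v1 := fun h => h13 h.symm
    have h41 : ¬ G.Adj v4 v1 := fun h => h14 h.symm
    have h42 : ¬ G.Adj v4 v2 := fun h => h24 h.symm
    fin_cases a <;> fin_cases b <;>
      simp_all [SimpleGraph.pathGraph_adj, SimpleGraph.irrefl] <;> try decide

instance inst_s5 : DecidableRel gem.Adj := fun a b => by
  unfold gem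
  rw [SimpleGraph.fromEdgeSet_adj]
  have : Decidable (s(a,b) ∈ ({s(0,1), s(1,2), s(2,3), s(4,0), s(4,1), s(4,2), s(4,3)} :
      Set (Sym2 (Fin 5)))) := by
    rw [Set.mem_insert_iff, Set.mem_insert_iff, Set.mem_insert_iff, Set.mem_insert_iff,
      Set.mem_insert_iff, Set.mem_insert_iff, Set.mem_singleton_iff]
    infer_instance
  exact instDecidableAnd

lemma gem_emb_aux {V : Type*} (G : SimpleGraph V) (v0 v1 v2 v3 v4 : V)
    (h01 : G.Adj v0 v1) (h12 : G.Adj v1 v2) (h23 : G.Adj v2 v3)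
    (h02 : ¬ G.Adj v0 v2) (h03 : ¬ G.Adj v0 v3) (h13 : ¬ G.Adj v1 v3)
    (h40 : G.Adj v4 v0) (h41 : G.Adj v4 v1) (h42 : G.Adj v4 v2) (h43 : G.Adj v4 v3) :
    Nonempty (gem ↪g G) := by
  have n01 : v0 ≠ v1 := h01.ne
  have n12 : v1 ≠ v2 := h12.ne
  have n23 : v2 ≠ v3 := h23.ne
  have n02 : v0 ≠ v2 := fun h => h03 (h.symm ▸ h23)
  have n03 : v0 ≠ v3 := fun h => h02 (h.symm ▸ h23.symm)
  have n13 : v1 ≠ v3 := fun h => h03 (h ▸ h01)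
  have n40 : v4 ≠ v0 := h40.ne
  have n41 : v4 ≠ v1 := h41.ne
  have n42 : v4 ≠ v2 := h42.ne
  have n43 : v4 ≠ v3 := h43.ne
  refine ⟨⟨⟨![v0,v1,v2,v3,v4], ?_⟩, ?_⟩⟩
  · intro a b hab
    have n10 := n01.symm; have n21 := n12.symm; have n32 := n23.symm
    have n20 := n02.symm; have n30 := n03.symm; have n31 := n13.symm
    have n04 := n40.symm; have n14 := n41.symm; have n24 := n42.symm
    have n34 := n43.symm
    fin_cases a <;> fin_cases b <;> simp_all <;> try decide
  · intro a b
    have h10 := h01.symm; have h21 := h12.symm; have h32 := h23.symm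
    have h04 := h40.symm; have h14 := h41.symm; have h24 := h42.symm; have h34 := h43.symm
    have h20 : ¬ G.Adj v2 v0 := fun h => h02 h.symm
    have h30 : ¬ G.Adj v3 v0 := fun h => h03 h.symm
    have h31 : ¬ G.Adj v3 v1 := fun h => h13 h.symm
    fin_cases a <;> fin_cases b <;>
      simp_all <;>
      first
        | (rw [iff_true_intro (by assumption : G.Adj _ _)]; try decide)
        | (rw [iff_false_intro (by assumption : ¬ G.Adj _ _)]; try decide)
        | decide
        | skip

lemma bool_core_aux (p c : Fin 5 → Bool)
    (hcp : ∀ i, c i → p i)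
    (hex : ∃ i, p i = true)
    (hF1 : ∀ j, p j → (c (j+1) ∨ c (j+2) ∨ c (j+3)))
    (hF1' : ∀ j, p j → (c (j+4) ∨ c (j+3) ∨ c (j+2)))
    (hF2 : ∀ j, ¬(p j ∧ p (j+1) ∧ p (j+2) ∧ p (j+3)))
    (hF3 : ∀ k, ¬(c (k+1) ∧ c (k+4) ∧ ¬(p (k+2)) ∧ ¬(p (k+3)))) :
    ∃ k, c k ∧ ¬(p (k+1)) ∧ ¬(p (k+4)) ∧ p (k+2) ∧ p (k+3) ∧ (c (k+2) ∨ c (k+3)) := by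
  revert hcp hex hF1 hF1' hF2 hF3; revert p c; decide

lemma f5a : ∀ i : Fin 5, i - 1 = i + 4 := by decide
lemma f5b : ∀ i : Fin 5, i - 2 = i + 3 := by decide
lemma f5c11 : ∀ i : Fin 5, i + 1 + 1 = i + 2 := by decide
lemma f5c21 : ∀ i : Fin 5, i + 2 + 1 = i + 3 := by decide
lemma f5c12 : ∀ i : Fin 5, i + 1 + 2 = i + 3 := by decide
lemma f5c44 : ∀ i : Fin 5, i + 4 + 4 = i + 3 := by decide
lemma f5c34 : ∀ i : Fin 5, i + 3 + 4 = i + 2 := by decide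
lemma f5c43 : ∀ i : Fin 5, i + 4 + 3 = i + 2 := by decide

end Aux

/-- Claim 2.1: every vertex of `G` lies in `A ∪ Y_1 ∪ ⋯ ∪ Y_5 ∪ R`. -/
theorem vertex_partition {V : Type*} [Fintype V] (G : SimpleGraph V)
    (hconn : G.Connected) (hfree : P5GemFree G)
    (hC5 : Nonempty (SimpleGraph.cycleGraph 5 ↪g G))
    (A : Fin 5 → Set V) (hA : IsC5Partition G A)
    (hmax : ∀ B : Fin 5 → Set V, IsC5Partition G B → ¬ (⋃ i, A i) ⊂ (⋃ i, B i)) :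
    ∀ x : V, x ∈ (⋃ i, A i) ∪ (⋃ i, Yset G A i) ∪ Rset G A := by
  classical
  -- basic adjacency facts between the classes
  have hab1 : ∀ i : Fin 5, ∀ a ∈ A i, ∀ b ∈ A (i+1), G.Adj a b := hA.complete_succ
  have hab4 : ∀ i : Fin 5, ∀ a ∈ A i, ∀ b ∈ A (i+4), G.Adj a b := by
    intro i; have h := hA.complete_pred i; rwa [f5a] at h
  have hn2 : ∀ i : Fin 5, ∀ a ∈ A i, ∀ b ∈ A (i+2), ¬ G.Adj a b := hA.anticomplete_succ
  have hn3 : ∀ i : Fin 5, ∀ a ∈ A i, ∀ b ∈ A (i+3), ¬ G.Adj a b := by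
    intro i; have h := hA.anticomplete_pred i; rwa [f5b] at h
  intro x
  by_cases hxA : x ∈ ⋃ i, A i
  · exact Set.mem_union_left _ (Set.mem_union_left _ hxA)
  by_cases hxR : ∀ a ∈ ⋃ j, A j, ¬ G.Adj x a
  · exact Set.mem_union_right _ ⟨hxA, hxR⟩
  push_neg at hxR
  obtain ⟨a0, ha0U, ha0adj⟩ := hxR
  obtain ⟨i0, ha0⟩ := Set.mem_iUnion.1 ha0U
  set P : Fin 5 → Prop := fun i => ∃ a ∈ A i, G.Adj x a with hPdef
  set C : Fin 5 → Prop := fun i => ∀ a ∈ A i, G.Adj x a with hCdef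
  have hxnotin : ∀ j, x ∉ A j := fun j hj => hxA (Set.mem_iUnion.2 ⟨j, hj⟩)
  -- L1 : P5 lemma, forward direction
  have hL1 : ∀ j, P j → ¬ C (j+1) → ¬ C (j+2) → ¬ C (j+3) → False := by
    intro j hpj h1 h2 h3
    obtain ⟨a, ha, hxa⟩ := hpj
    simp only [hCdef] at h1 h2 h3
    push_neg at h1 h2 h3
    obtain ⟨b, hb, hxb⟩ := h1
    obtain ⟨c, hc, hxc⟩ := h2
    obtain ⟨d, hd, hxd⟩ := h3
    refine hfree.1 (p5_emb_aux G x a b c d hxa (hab1 j a ha b hb) ?_ ?_ hxb hxc hxd ?_ ?_ ?_)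
    · exact hab1 (j+1) b hb c (by rwa [f5c11])
    · exact hab1 (j+2) c hc d (by rwa [f5c21])
    · exact hn2 j a ha c hc
    · exact hn3 j a ha d hd
    · exact hn2 (j+1) b hb d (by rwa [f5c12])
  -- L1' : P5 lemma, backward direction
  have hL1' : ∀ j, P j → ¬ C (j+4) → ¬ C (j+3) → ¬ C (j+2) → False := by
    intro j hpj h1 h2 h3
    obtain ⟨a, ha, hxa⟩ := hpj
    simp only [hCdef] at h1 h2 h3
    push_neg at h1 h2 h3
    obtain ⟨b, hb, hxb⟩ := h1
    obtain ⟨c, hc, hxc⟩ := h2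
    obtain ⟨d, hd, hxd⟩ := h3
    refine hfree.1 (p5_emb_aux G x a b c d hxa (hab4 j a ha b hb) ?_ ?_ hxb hxc hxd ?_ ?_ ?_)
    · exact hab4 (j+4) b hb c (by rwa [f5c44])
    · exact hab4 (j+3) c hc d (by rwa [f5c34])
    · exact hn3 j a ha c hc
    · exact hn2 j a ha d hd
    · exact hn3 (j+4) b hb d (by rwa [f5c43])
  -- L2 : gem lemma
  have hL2 : ∀ j, P j → P (j+1) → P (j+2) → P (j+3) → False := by
    intro j h0 h1 h2 h3
    obtain ⟨a, ha, hxa⟩ := h0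
    obtain ⟨b, hb, hxb⟩ := h1
    obtain ⟨c, hc, hxc⟩ := h2
    obtain ⟨d, hd, hxd⟩ := h3
    refine hfree.2 (gem_emb_aux G a b c d x (hab1 j a ha b hb) ?_ ?_ ?_ ?_ ?_ hxa hxb hxc hxd)
    · exact hab1 (j+1) b hb c (by rwa [f5c11])
    · exact hab1 (j+2) c hc d (by rwa [f5c21])
    · exact hn2 j a ha c hc
    · exact hn3 j a ha d hd
    · exact hn2 (j+1) b hb d (by rwa [f5c12])
  -- L3 : maximality lemma
  have hL3 : ∀ k, C (k+1) → C (k+4) → ¬ P (k+2) → ¬ P (k+3) → False := by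
    intro k hc1 hc4 hp2 hp3
    simp only [hCdef] at hc1 hc4
    simp only [hPdef] at hp2 hp3
    push_neg at hp2 hp3
    set B : Fin 5 → Set V := fun j => if j = k then insert x (A k) else A j with hBdef
    have hBsub : ∀ j, A j ⊆ B j := by
      intro j
      by_cases h : j = k
      · subst h; simp only [B, if_pos rfl]; exact Set.subset_insert _ _
      · simp only [B, if_neg h]
        exact subset_rfl
    have hmemB : ∀ j y, y ∈ B j → (y = x ∧ j = k) ∨ y ∈ A j := by
      intro j y hy
      by_cases h : j = k
      · subst h
        simp only [B, if_pos rfl, Set.mem_insert_iff] at hy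
        rcases hy with h' | h'
        · exact Or.inl ⟨h', rfl⟩
        · exact Or.inr h'
      · simp only [B, if_neg h] at hy; exact Or.inr hy
    have hne1 : ∀ i : Fin 5, i + 1 ≠ i := by decide
    have hne2 : ∀ i : Fin 5, i + 2 ≠ i := by decide
    have hne3 : ∀ i : Fin 5, i + 3 ≠ i := by decide
    have hne4 : ∀ i : Fin 5, i + 4 ≠ i := by decide
    have heq1 : ∀ i k : Fin 5, i + 1 = k → i = k + 4 := by decide
    have heq4 : ∀ i k : Fin 5, i + 4 = k → i = k + 1 := by decide
    have heq2 : ∀ i k : Fin 5, i + 2 = k → i = k + 3 := by decide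
    have heq3 : ∀ i k : Fin 5, i + 3 = k → i = k + 2 := by decide
    have hBA : ∀ j, j ≠ k → B j = A j := fun j h => by simp only [B, if_neg h]
    have hBpart : IsC5Partition G B := by
      constructor
      · exact fun i => ((hA.nonempty i).elim (fun a ha => ⟨a, hBsub i ha⟩))
      · intro i j hij
        rw [Set.disjoint_left]
        intro y hyi hyj
        rcases hmemB i y hyi with ⟨rfl, rfl⟩ | hyAi
        · rcases hmemB j y hyj with ⟨_, rfl⟩ | hyAj
          · exact hij rfl
          · exact hxnotin j hyAj
        · rcases hmemB j y hyj with ⟨rfl, rfl⟩ | hyAj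
          · exact hxnotin i hyAi
          · exact (hA.disjoint i j hij).ne_of_mem hyAi hyAj rfl
      · intro i a haB b hbB
        rcases hmemB i a haB with ⟨rfl, rfl⟩ | haA
        · rw [hBA (i+1) (hne1 i)] at hbB
          exact hc1 b hbB
        · rcases hmemB (i+1) b hbB with ⟨rfl, hik⟩ | hbA
          · have : i = k + 4 := heq1 i k hik
            subst this
            exact (hc4 a haA).symm
          · exact hA.complete_succ i a haA b hbA
      · intro i a haB b hbB
        rw [f5a] at hbB
        rcases hmemB i a haB with ⟨rfl, rfl⟩ | haA
        · rw [hBA (i+4) (hne4 i)] at hbB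
          exact hc4 b hbB
        · rcases hmemB (i+4) b hbB with ⟨rfl, hik⟩ | hbA
          · have : i = k + 1 := heq4 i k hik
            subst this
            exact (hc1 a haA).symm
          · have h := hA.complete_pred i a haA
            rw [f5a] at h
            exact h b hbA
      · intro i a haB b hbB hadj
        rcases hmemB i a haB with ⟨rfl, rfl⟩ | haA
        · rw [hBA (i+2) (hne2 i)] at hbB
          exact hp2 b hbB hadj
        · rcases hmemB (i+2) b hbB with ⟨rfl, hik⟩ | hbA
          · have : i = k + 3 := heq2 i k hik
            subst this
            exact hp3 a haA hadj.symm
          · exact hA.anticomplete_succ i a haA b hbA hadj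
      · intro i a haB b hbB hadj
        rw [f5b] at hbB
        rcases hmemB i a haB with ⟨rfl, rfl⟩ | haA
        · rw [hBA (i+3) (hne3 i)] at hbB
          exact hp3 b hbB hadj
        · rcases hmemB (i+3) b hbB with ⟨rfl, hik⟩ | hbA
          · have : i = k + 2 := heq3 i k hik
            subst this
            exact hp2 a haA hadj.symm
          · have h := hA.anticomplete_pred i a haA
            rw [f5b] at h
            exact h b hbA hadj
    refine hmax B hBpart ?_
    rw [Set.ssubset_def]
    constructor
    · exact Set.iUnion_mono hBsub
    · intro hsub
      refine hxA (hsub ?_)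
      refine Set.mem_iUnion.2 ⟨k, ?_⟩
      simp only [B, if_pos rfl]
      exact Set.mem_insert x _
  -- put it together with the boolean core
  have hCP : ∀ i, C i → P i := by
    intro i hci
    obtain ⟨a, ha⟩ := hA.nonempty i
    exact ⟨a, ha, hci a ha⟩
  have key : ∃ k, C k ∧ ¬P (k+1) ∧ ¬P (k+4) ∧ P (k+2) ∧ P (k+3) ∧ (C (k+2) ∨ C (k+3)) := by
    have hp : ∀ i, decide (P i) = true ↔ P i := fun i => by simp
    have hc : ∀ i, decide (C i) = true ↔ C i := fun i => by simp
    obtain ⟨k, h1, h2, h3, h4, h5, h6⟩ :=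
      bool_core_aux (fun i => decide (P i)) (fun i => decide (C i))
        (fun i hci => (hp i).2 (hCP i ((hc i).1 hci)))
        ⟨i0, (hp i0).2 ⟨a0, ha0, ha0adj⟩⟩
        (fun j hpj => by
          by_contra hcon
          push_neg at hcon
          exact hL1 j ((hp j).1 hpj) (fun h => hcon.1 ((hc _).2 h))
            (fun h => hcon.2.1 ((hc _).2 h)) (fun h => hcon.2.2 ((hc _).2 h)))
        (fun j hpj => by
          by_contra hcon
          push_neg at hcon
          exact hL1' j ((hp j).1 hpj) (fun h => hcon.1 ((hc _).2 h))
            (fun h => hcon.2.1 ((hc _).2 h)) (fun h => hcon.2.2 ((hc _).2 h)))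
        (fun j hj => hL2 j ((hp _).1 hj.1) ((hp _).1 hj.2.1) ((hp _).1 hj.2.2.1)
          ((hp _).1 hj.2.2.2))
        (fun k hk => hL3 k ((hc _).1 hk.1) ((hc _).1 hk.2.1)
          (fun h => hk.2.2.1 ((hp _).2 h)) (fun h => hk.2.2.2 ((hp _).2 h)))
    exact ⟨k, (hc k).1 h1, fun h => h2 ((hp _).2 h), fun h => h3 ((hp _).2 h),
      (hp _).1 h4, (hp _).1 h5, h6.imp ((hc _).1) ((hc _).1)⟩
  obtain ⟨k, hck, hpk1, hpk4, hpk2, hpk3, hlast⟩ := key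
  refine Set.mem_union_left _ (Set.mem_union_right _ (Set.mem_iUnion.2 ⟨k, ?_⟩))
  have hnk4 : ∀ a ∈ A (k+4), ¬ G.Adj x a := by
    intro a ha h; exact hpk4 ⟨a, ha, h⟩
  have hnk1 : ∀ a ∈ A (k+1), ¬ G.Adj x a := by
    intro a ha h; exact hpk1 ⟨a, ha, h⟩
  show x ∈ Yset G A k
  rw [Yset, Set.mem_setOf_eq, f5a, f5b]
  exact ⟨hxA, hck, hnk4, hnk1, hpk3, hpk2, hlast.symm.imp id id⟩
end

section
/- With the standard setup, for each i (mod 5) the subgraphs of G induced by A_i and by Y_i are P4-free. -/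
open SimpleGraph

set_option linter.unreachableTactic false
set_option linter.unusedTactic false

lemma gem_adj : ∀ j k : Fin 5, gem.Adj j k ↔
    (j ≠ k ∧ (j = 4 ∨ k = 4 ∨ j.val + 1 = k.val ∨ k.val + 1 = j.val)) := by
  intro j k
  fin_cases j <;> fin_cases k <;> simp [gem, SimpleGraph.fromEdgeSet_adj]

set_option maxHeartbeats 800000 in
lemma p4free_of_dominating {V : Type*} (G : SimpleGraph V) (S : Set V) (a : V)
    (ha : a ∉ S) (hadj : ∀ s ∈ S, G.Adj a s) (hgem : InducedFree gem G) :
    InducedFree (SimpleGraph.pathGraph 4) (G.induce S) := by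
  rintro ⟨f⟩
  apply hgem
  set v : Fin 4 → V := fun j => (f j : V) with hv
  have hvinj : ∀ i j : Fin 4, v i = v j → i = j := fun i j h => f.injective (Subtype.ext h)
  have hvS : ∀ i, v i ∈ S := fun i => (f i).2
  have hvadj : ∀ i j : Fin 4, G.Adj (v i) (v j) ↔ (SimpleGraph.pathGraph 4).Adj i j := by
    intro i j
    rw [← f.map_adj_iff]
    exact Iff.rfl
  have havadj : ∀ i, G.Adj a (v i) := fun i => hadj _ (hvS i)
  have havadj' : ∀ i, G.Adj (v i) a := fun i => (havadj i).symm
  have hva : ∀ i, v i ≠ a := fun i h => ha (h ▸ hvS i)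
  refine ⟨⟨⟨![v 0, v 1, v 2, v 3, a], ?_⟩, ?_⟩⟩
  · intro k1 k2 h
    fin_cases k1 <;> fin_cases k2 <;> simp at h ⊢ <;>
      first
        | rfl
        | (exact absurd (hvinj _ _ h) (by decide))
        | (exact absurd h (hva _))
        | (exact absurd h.symm (hva _))
  · intro k1 k2
    show G.Adj (![v 0, v 1, v 2, v 3, a] k1) (![v 0, v 1, v 2, v 3, a] k2) ↔ gem.Adj k1 k2
    fin_cases k1 <;> fin_cases k2 <;>
      simp [gem_adj, hvadj, havadj, havadj', G.irrefl, SimpleGraph.pathGraph_adj, Function.Embedding.coeFn_mk, RelEmbedding.coe_mk] <;>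
      first
        | decide
        | (intro h; exact absurd (hvinj _ _ h) (by decide))

/-- Claim 2.2: for each `i`, the subgraphs induced by `A i` and by `Y i` are P4-free. -/
theorem ai_yi_p4free {V : Type*} [Fintype V] (G : SimpleGraph V)
    (hconn : G.Connected) (hfree : P5GemFree G)
    (hC5 : Nonempty (SimpleGraph.cycleGraph 5 ↪g G))
    (A : Fin 5 → Set V) (hA : IsC5Partition G A)
    (hmax : ∀ B : Fin 5 → Set V, IsC5Partition G B → ¬ (⋃ i, A i) ⊂ (⋃ i, B i)) :
    ∀ i : Fin 5, InducedFree (SimpleGraph.pathGraph 4) (G.induce (A i)) ∧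
      InducedFree (SimpleGraph.pathGraph 4) (G.induce (Yset G A i)) := by
  intro i
  obtain ⟨b, hb⟩ := hA.nonempty (i + 1)
  obtain ⟨c, hc⟩ := hA.nonempty i
  constructor
  · refine p4free_of_dominating G (A i) b ?_ ?_ hfree.2
    · intro hbi
      exact (hA.disjoint i (i + 1) (fun h => absurd (congrArg (· + 1) h.symm) (by simp))).ne_of_mem hbi hb rfl
    · intro s hs
      exact (hA.complete_succ i s hs b hb).symm
  · refine p4free_of_dominating G (Yset G A i) c ?_ ?_ hfree.2
    · intro hcY
      exact hcY.1 (Set.mem_iUnion.mpr ⟨i, hc⟩)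
    · intro s hs
      exact (hs.2.1 c hc).symm
end

section
/- With the standard setup, for each i (mod 5) there are no edges between Y_{i-1} and Y_{i+1}; that is, Y_{i-1} is anticomplete to Y_{i+1}. -/
open SimpleGraph

lemma gem_adj_iff_s7 (u v : Fin 5) : gem.Adj u v ↔
    (u=0∧v=1)∨(u=1∧v=0)∨(u=1∧v=2)∨(u=2∧v=1)∨(u=2∧v=3)∨(u=3∧v=2)∨(u=4∧v=0)∨(u=0∧v=4)∨
    (u=4∧v=1)∨(u=1∧v=4)∨(u=4∧v=2)∨(u=2∧v=4)∨(u=4∧v=3)∨(u=3∧v=4) := by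
  fin_cases u <;> fin_cases v <;> simp [gem, Sym2.eq_iff]

lemma gem_embed {V : Type*} (G : SimpleGraph V) (a y b c x : V)
    (exa : G.Adj x a) (eyb : G.Adj y b) (ebc : G.Adj b c) (hxy' : G.Adj x y)
    (eya : G.Adj y a) (exb : G.Adj x b) (exc : G.Adj x c)
    (nab : ¬ G.Adj a b) (nac : ¬ G.Adj a c) (nyc : ¬ G.Adj y c)
    (hxy : x ≠ y) (hxa : x ≠ a) (hxb : x ≠ b) (hxc : x ≠ c)
    (hya : y ≠ a) (hyb : y ≠ b) (hyc : y ≠ c)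
    (hab : a ≠ b) (hac : a ≠ c) (hbc : b ≠ c) :
    Nonempty (gem ↪g G) := by
  refine ⟨⟨⟨![a, y, b, c, x], ?_⟩, ?_⟩⟩
  · intro u v huv
    fin_cases u <;> fin_cases v <;> simp at huv ⊢ <;>
      first
        | assumption
        | exact hxy huv.symm | exact hxa huv.symm | exact hxb huv.symm | exact hxc huv.symm
        | exact hya huv.symm | exact hyb huv.symm | exact hyc huv.symm
        | exact hab huv.symm | exact hac huv.symm | exact hbc huv.symm
        | exact hxy huv | exact hxa huv | exact hxb huv | exact hxc huv
        | exact hya huv | exact hyb huv | exact hyc huv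
        | exact hab huv | exact hac huv | exact hbc huv
  · intro u v
    rw [gem_adj_iff_s7]
    fin_cases u <;> fin_cases v <;> simp <;>
      first
        | exact G.irrefl
        | exact eya.symm | exact eya | exact eyb | exact eyb.symm | exact ebc | exact ebc.symm
        | exact exa | exact exa.symm | exact exb | exact exb.symm | exact exc | exact exc.symm
        | exact hxy' | exact hxy'.symm
        | exact nab | exact (fun h => nab h.symm)
        | exact nac | exact (fun h => nac h.symm)
        | exact nyc | exact (fun h => nyc h.symm)

lemma fin5_aux (i : Fin 5) : i - 1 + 2 = i + 1 ∧ i - 1 - 2 = i + 2 ∧ i + 1 - 2 = i - 1 ∧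
    i + 1 + 1 = i + 2 ∧ i - 1 ≠ i + 1 ∧ i - 1 ≠ i + 2 ∧ i + 1 ≠ i + 2 := by
  fin_cases i <;> decide

/-- Claim 2.3: for each `i`, `Y (i-1)` is anticomplete to `Y (i+1)`. -/
theorem yset_anticomplete {V : Type*} [Fintype V] (G : SimpleGraph V)
    (hconn : G.Connected) (hfree : P5GemFree G)
    (hC5 : Nonempty (SimpleGraph.cycleGraph 5 ↪g G))
    (A : Fin 5 → Set V) (hA : IsC5Partition G A)
    (hmax : ∀ B : Fin 5 → Set V, IsC5Partition G B → ¬ (⋃ i, A i) ⊂ (⋃ i, B i)) :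
    ∀ i : Fin 5, AnticompleteTo G (Yset G A (i - 1)) (Yset G A (i + 1)) := by
  intro i x hx y hy hxy
  obtain ⟨h1, h2, h3, h4, hne1, hne2, hne3⟩ := fin5_aux i
  obtain ⟨hxA, hxcomp, -, -, ⟨c, hc, hxc'⟩, ⟨b, hb, hxb'⟩, -⟩ := hx
  obtain ⟨hyA, hycomp, -, hya, ⟨a, ha, hya'⟩, -, -⟩ := hy
  rw [h2] at hc
  rw [h1] at hb
  rw [h3] at ha
  rw [h4] at hya
  have exa : G.Adj x a := hxcomp a ha
  have eyb : G.Adj y b := hycomp b hb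
  have ebc : G.Adj b c := hA.complete_succ (i + 1) b hb c (h4 ▸ hc)
  have nab : ¬ G.Adj a b := hA.anticomplete_succ (i - 1) a ha b (h1 ▸ hb)
  have nac : ¬ G.Adj a c := hA.anticomplete_pred (i - 1) a ha c (h2 ▸ hc)
  have nyc : ¬ G.Adj y c := hya c hc
  have hxmem : ∀ j : Fin 5, ∀ z ∈ A j, x ≠ z := by
    intro j z hz h; exact hxA (h ▸ Set.mem_iUnion.2 ⟨j, hz⟩)
  have hymem : ∀ j : Fin 5, ∀ z ∈ A j, y ≠ z := by
    intro j z hz h; exact hyA (h ▸ Set.mem_iUnion.2 ⟨j, hz⟩)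
  exact hfree.2 (gem_embed G a y b c x exa eyb ebc hxy hya' hxb' hxc'
    nab nac nyc hxy.ne (hxmem _ a ha) (hxmem _ b hb) (hxmem _ c hc)
    (hymem _ a ha) (hymem _ b hb) (hymem _ c hc)
    (fun h => (hA.disjoint _ _ hne1).ne_of_mem ha hb h)
    (fun h => (hA.disjoint _ _ hne2).ne_of_mem ha hc h)
    (fun h => (hA.disjoint _ _ hne3).ne_of_mem hb hc h))
end

section
/- With the standard setup, if for some i the set Y_i contains a pure vertex (a vertex complete to A_{i-2} ∪ A_{i+2}), then every vertex of Y_i is pure. -/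
open SimpleGraph

lemma gem_contra {V : Type*} {G : SimpleGraph V} (h : InducedFree gem G)
    {v0 v1 v2 v3 v4 : V}
    (d02 : v0 ≠ v2) (d03 : v0 ≠ v3) (d13 : v1 ≠ v3)
    (h01 : G.Adj v0 v1) (h12 : G.Adj v1 v2) (h23 : G.Adj v2 v3)
    (h40 : G.Adj v4 v0) (h41 : G.Adj v4 v1) (h42 : G.Adj v4 v2) (h43 : G.Adj v4 v3)
    (n02 : ¬ G.Adj v0 v2) (n03 : ¬ G.Adj v0 v3) (n13 : ¬ G.Adj v1 v3) : False := by
  apply h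
  have d01 := h01.ne
  have d12 := h12.ne
  have d23 := h23.ne
  have d40 := h40.ne
  have d41 := h41.ne
  have d42 := h42.ne
  have d43 := h43.ne
  refine ⟨⟨⟨![v0,v1,v2,v3,v4], ?_⟩, ?_⟩⟩
  · intro x y hxy
    fin_cases x <;> fin_cases y <;> simp_all
  · intro x y
    fin_cases x <;> fin_cases y <;>
      simp [gem, Set.mem_insert_iff, Set.mem_singleton_iff, G.irrefl] <;>
      first
        | assumption
        | (exact fun hh => n02 hh.symm)
        | (exact fun hh => n03 hh.symm)
        | (exact fun hh => n13 hh.symm)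
        | (exact h01.symm)
        | (exact h12.symm)
        | (exact h23.symm)
        | (exact h40.symm)
        | (exact h41.symm)
        | (exact h42.symm)
        | (exact h43.symm)

lemma core {V : Type*} {G : SimpleGraph V} (hg : InducedFree gem G)
    {A : Fin 5 → Set V} (hA : IsC5Partition G A) {i : Fin 5}
    {y : V} (hy : y ∈ Yset G A i) (hyc : ∀ c ∈ A (i+2), G.Adj y c)
    {p : V} (hp : p ∈ Yset G A i) (hpure : IsPureVertex G A i p) :
    ∀ a ∈ A (i-2), G.Adj y a := by
  by_contra hcon
  push_neg at hcon
  obtain ⟨a, haA, hya⟩ := hcon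
  obtain ⟨hyU, hyi, hyim1, hyip1, ⟨b, hbA, hyb⟩, -, -⟩ := hy
  obtain ⟨hpU, hpi, hpim1, hpip1, -, -, -⟩ := hp
  obtain ⟨hpm2, hpp2⟩ := hpure
  obtain ⟨c, hcA⟩ := hA.nonempty (i+2)
  obtain ⟨ai, haiA⟩ := hA.nonempty i
  obtain ⟨am1, ham1A⟩ := hA.nonempty (i-1)
  have yA : ∀ j, y ∉ A j := fun j hj => hyU (Set.mem_iUnion.mpr ⟨j, hj⟩)
  have pA : ∀ j, p ∉ A j := fun j hj => hpU (Set.mem_iUnion.mpr ⟨j, hj⟩)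
  have dis : ∀ {j k : Fin 5} {u v : V}, j ≠ k → u ∈ A j → v ∈ A k → u ≠ v :=
    fun hjk hu hv => (hA.disjoint _ _ hjk).ne_of_mem hu hv
  -- index identities
  have E1 : ∀ k : Fin 5, (k-2) - 1 = k + 2 := by decide
  have E2 : ∀ k : Fin 5, (k-2) + 2 = k := by decide
  have E3 : ∀ k : Fin 5, (k+2) - 2 = k := by decide
  have E4 : ∀ k : Fin 5, (k-1) - 1 = k - 2 := by decide
  have E5 : ∀ k : Fin 5, (k-1) - 2 = k + 2 := by decide
  have N1 : ∀ k : Fin 5, k - 2 ≠ k := by decide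
  have N2 : ∀ k : Fin 5, k + 2 ≠ k := by decide
  have N3 : ∀ k : Fin 5, k - 1 ≠ k + 2 := by decide
  have e1 : i - 2 - 1 = i + 2 := E1 i
  have e2 : i - 2 + 2 = i := E2 i
  have e3 : i + 2 - 2 = i := E3 i
  have e4 : i - 1 - 1 = i - 2 := E4 i
  have e5 : i - 1 - 2 = i + 2 := E5 i
  -- adjacency facts among A-vertices
  have hac : G.Adj a c := hA.complete_pred (i-2) a haA c (by rw [e1]; exact hcA)
  have hbc : G.Adj b c := hA.complete_pred (i-2) b hbA c (by rw [e1]; exact hcA)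
  have haai : ¬ G.Adj a ai := hA.anticomplete_succ (i-2) a haA ai (by rw [e2]; exact haiA)
  have hcai : ¬ G.Adj c ai := hA.anticomplete_pred (i+2) c hcA ai (by rw [e3]; exact haiA)
  have ham1a : G.Adj am1 a := hA.complete_pred (i-1) am1 ham1A a (by rw [e4]; exact haA)
  have ham1b : G.Adj am1 b := hA.complete_pred (i-1) am1 ham1A b (by rw [e4]; exact hbA)
  have ham1c : ¬ G.Adj am1 c := hA.anticomplete_pred (i-1) am1 ham1A c (by rw [e5]; exact hcA)
  by_cases hpy : G.Adj p y
  · -- gem on a - c - y - ai with apex p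
    exact gem_contra hg
      (fun h => yA _ (h ▸ haA)) (dis (N1 i) haA haiA)
      (dis (N2 i) hcA haiA)
      hac (hyc c hcA).symm (hyi ai haiA)
      (hpm2 a haA) (hpp2 c hcA) hpy (hpi ai haiA)
      (fun h => hya h.symm) haai hcai
  · by_cases hab : G.Adj a b
    · -- gem on am1 - a - c - y with apex b
      exact gem_contra hg
        (dis (N3 i) ham1A hcA) (fun h => yA _ (h ▸ ham1A))
        (fun h => yA _ (h ▸ haA))
        ham1a hac (hyc c hcA).symm
        ham1b.symm hab.symm hbc (hyb).symm
        ham1c (fun h => hyim1 am1 ham1A h.symm) (fun h => hya h.symm)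
    · -- gem on a - p - b - y with apex c
      exact gem_contra hg
        (fun h => hya (by rw [h]; exact hyb)) (fun h => yA _ (h ▸ haA))
        (fun h => hya (by rw [← h]; exact hpm2 a haA))
        (hpm2 a haA).symm (hpm2 b hbA) hyb.symm
        hac.symm (hpp2 c hcA).symm hbc.symm (hyc c hcA).symm
        hab (fun h => hya h.symm) hpy

lemma reflect {V : Type*} {G : SimpleGraph V} {A : Fin 5 → Set V}
    (hA : IsC5Partition G A) (i : Fin 5) :
    IsC5Partition G (fun j => A (2*i - j)) := by
  have R1 : ∀ i j : Fin 5, 2*i - (j+1) = (2*i - j) - 1 := by decide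
  have R2 : ∀ i j : Fin 5, 2*i - (j-1) = (2*i - j) + 1 := by decide
  have R3 : ∀ i j : Fin 5, 2*i - (j+2) = (2*i - j) - 2 := by decide
  have R4 : ∀ i j : Fin 5, 2*i - (j-2) = (2*i - j) + 2 := by decide
  have Inj : ∀ i j k : Fin 5, 2*i - j = 2*i - k → j = k := by decide
  constructor
  · intro j; exact hA.nonempty _
  · intro j k hjk; exact hA.disjoint _ _ (fun h => hjk (Inj i j k h))
  · intro j
    show CompleteTo G (A (2*i - j)) (A (2*i - (j+1)))
    rw [R1 i j]; exact hA.complete_pred _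
  · intro j
    show CompleteTo G (A (2*i - j)) (A (2*i - (j-1)))
    rw [R2 i j]; exact hA.complete_succ _
  · intro j
    show AnticompleteTo G (A (2*i - j)) (A (2*i - (j+2)))
    rw [R3 i j]; exact hA.anticomplete_pred _
  · intro j
    show AnticompleteTo G (A (2*i - j)) (A (2*i - (j-2)))
    rw [R4 i j]; exact hA.anticomplete_succ _

theorem pure_all_pure_aux {V : Type*} (G : SimpleGraph V)
    (hfree : InducedFree gem G)
    (A : Fin 5 → Set V) (hA : IsC5Partition G A) :
    ∀ i : Fin 5, (∃ p ∈ Yset G A i, IsPureVertex G A i p) → ∀ y ∈ Yset G A i, IsPureVertex G A i y := by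
  intro i hex y hy
  obtain ⟨p, hp, hpure⟩ := hex
  have S0 : ∀ i : Fin 5, 2*i - i = i := by decide
  have S1 : ∀ i : Fin 5, 2*i - (i-1) = i+1 := by decide
  have S2 : ∀ i : Fin 5, 2*i - (i+1) = i-1 := by decide
  have S3 : ∀ i : Fin 5, 2*i - (i-2) = i+2 := by decide
  have S4 : ∀ i : Fin 5, 2*i - (i+2) = i-2 := by decide
  have SS : ∀ i j : Fin 5, 2*i - (2*i - j) = j := by decide
  have hUB : (⋃ j, (fun j => A (2*i - j)) j) = ⋃ j, A j := by
    ext v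
    simp only [Set.mem_iUnion]
    constructor
    · rintro ⟨j, h⟩; exact ⟨_, h⟩
    · rintro ⟨j, h⟩
      exact ⟨2*i - j, show v ∈ A (2*i - (2*i - j)) by rw [SS i j]; exact h⟩
  have toB : ∀ z, z ∈ Yset G A i → z ∈ Yset G (fun j => A (2*i - j)) i := by
    rintro z ⟨h0, h1, h2, h3, h4, h5, h6⟩
    refine ⟨by rw [hUB]; exact h0, ?_, ?_, ?_, ?_, ?_, ?_⟩
    · show ∀ a ∈ A (2*i - i), G.Adj z a
      rw [S0 i]; exact h1
    · show ∀ a ∈ A (2*i - (i-1)), ¬ G.Adj z a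
      rw [S1 i]; exact h3
    · show ∀ a ∈ A (2*i - (i+1)), ¬ G.Adj z a
      rw [S2 i]; exact h2
    · show ∃ a ∈ A (2*i - (i-2)), G.Adj z a
      rw [S3 i]; exact h5
    · show ∃ a ∈ A (2*i - (i+2)), G.Adj z a
      rw [S4 i]; exact h4
    · refine h6.elim (fun h => Or.inr ?_) (fun h => Or.inl ?_)
      · show ∀ a ∈ A (2*i - (i+2)), G.Adj z a
        rw [S4 i]; exact h
      · show ∀ a ∈ A (2*i - (i-2)), G.Adj z a
        rw [S3 i]; exact h
  have hpureB : IsPureVertex G (fun j => A (2*i - j)) i p := by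
    refine ⟨?_, ?_⟩
    · show ∀ a ∈ A (2*i - (i-2)), G.Adj p a
      rw [S3 i]; exact hpure.2
    · show ∀ a ∈ A (2*i - (i+2)), G.Adj p a
      rw [S4 i]; exact hpure.1
  rcases hy.2.2.2.2.2.2 with h | h
  · -- y complete to A (i-2); get A (i+2) by reflection
    have hycB : ∀ c ∈ (fun j => A (2*i - j)) (i+2), G.Adj y c := by
      show ∀ c ∈ A (2*i - (i+2)), G.Adj y c
      rw [S4 i]; exact h
    have r : ∀ a ∈ A (2*i - (i-2)), G.Adj y a :=
      core hfree (reflect hA i) (toB y hy) hycB (toB p hp) hpureB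
    rw [S3 i] at r
    exact ⟨h, r⟩
  · have l : ∀ a ∈ A (i-2), G.Adj y a := core hfree hA hy h hp hpure
    exact ⟨l, h⟩

/-- Claim 2.4: if some vertex of `Y i` is pure then every vertex of `Y i` is pure. -/
theorem exists_pure_all_pure {V : Type*} [Fintype V] (G : SimpleGraph V)
    (hconn : G.Connected) (hfree : P5GemFree G)
    (hC5 : Nonempty (SimpleGraph.cycleGraph 5 ↪g G))
    (A : Fin 5 → Set V) (hA : IsC5Partition G A)
    (hmax : ∀ B : Fin 5 → Set V, IsC5Partition G B → ¬ (⋃ i, A i) ⊂ (⋃ i, B i)) :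
    ∀ i : Fin 5, (∃ p ∈ Yset G A i, IsPureVertex G A i p) → ∀ y ∈ Yset G A i, IsPureVertex G A i y :=
  pure_all_pure_aux G hfree.2 A hA
end

section
/- With the standard setup, for each i (mod 5): either Y_i is complete to A_{i+2}, or Y_i is complete to A_{i-2}. -/
open SimpleGraph

lemma gem_embed_s9 {V : Type*} (G : SimpleGraph V) (a b c d e : V)
    (hab : G.Adj a b) (hbc : G.Adj b c) (hcd : G.Adj c d)
    (hea : G.Adj e a) (heb : G.Adj e b) (hec : G.Adj e c) (hed : G.Adj e d)
    (hac : ¬ G.Adj a c) (had : ¬ G.Adj a d) (hbd : ¬ G.Adj b d)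
    (nac : a ≠ c) (nad : a ≠ d) (nbd : b ≠ d) :
    Nonempty (gem ↪g G) := by
  refine ⟨⟨⟨![a,b,c,d,e], ?_⟩, ?_⟩⟩
  · intro i j h
    fin_cases i <;> fin_cases j <;> simp_all
  · intro i j
    fin_cases i <;> fin_cases j <;>
      simp [gem, Sym2.eq_iff] <;> first
      | exact hab | exact hab.symm
      | exact hbc | exact hbc.symm
      | exact hcd | exact hcd.symm
      | exact hea | exact hea.symm
      | exact heb | exact heb.symm
      | exact hec | exact hec.symm
      | exact hed | exact hed.symm
      | exact hac | exact fun h => hac h.symm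
      | exact had | exact fun h => had h.symm
      | exact hbd | exact fun h => hbd h.symm

lemma fin5_arith : ∀ i : Fin 5, i - 2 - 1 = i + 2 ∧ (i + 1) - 1 = i ∧
    (i + 1) + 1 = i + 2 ∧ (i + 1) + 2 = i - 2 ∧ i ≠ i + 2 ∧ i ≠ i - 2 ∧
    i + 1 ≠ i - 2 := by decide


/-- Claim 2.5: for each `i`, either `Y i` is complete to `A (i+2)` or `Y i` is complete to
`A (i-2)`. -/
theorem yset_complete_one_side {V : Type*} [Fintype V] (G : SimpleGraph V)
    (hconn : G.Connected) (hfree : P5GemFree G)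
    (hC5 : Nonempty (SimpleGraph.cycleGraph 5 ↪g G))
    (A : Fin 5 → Set V) (hA : IsC5Partition G A)
    (hmax : ∀ B : Fin 5 → Set V, IsC5Partition G B → ¬ (⋃ i, A i) ⊂ (⋃ i, B i)) :
    ∀ i : Fin 5, CompleteTo G (Yset G A i) (A (i + 2)) ∨
      CompleteTo G (Yset G A i) (A (i - 2)) := by
  intro i
  by_contra hcon
  push_neg at hcon
  obtain ⟨h1, h2⟩ := hcon
  unfold CompleteTo at h1 h2
  push_neg at h1 h2
  obtain ⟨y1, hy1, u, hu, hy1u⟩ := h1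
  obtain ⟨y2, hy2, v, hv, hy2v⟩ := h2
  obtain ⟨e1, e2, e3, e4, e5, e6, e7⟩ := fin5_arith i
  obtain ⟨hy1A, hy1i, _, hy1p1, _, ⟨u', hu', hy1u'⟩, hy1alt⟩ := hy1
  obtain ⟨hy2A, hy2i, _, hy2p1, ⟨v', hv', hy2v'⟩, _, hy2alt⟩ := hy2
  -- y1 is complete to A (i-2)
  have hy1m : ∀ a ∈ A (i - 2), G.Adj y1 a := by
    rcases hy1alt with h | h
    · exact h
    · exact absurd (h u hu) hy1u
  have hy2p : ∀ a ∈ A (i + 2), G.Adj y2 a := by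
    rcases hy2alt with h | h
    · exact absurd (h v hv) hy2v
    · exact h
  obtain ⟨p, hp⟩ := hA.nonempty i
  obtain ⟨q, hq⟩ := hA.nonempty (i + 1)
  -- cross adjacency: A (i-2) complete to A (i+2)
  have cross : ∀ x ∈ A (i - 2), ∀ y ∈ A (i + 2), G.Adj x y := by
    intro x hx y hy
    have := hA.complete_pred (i - 2) x hx y (by rwa [e1])
    exact this
  -- some anticompleteness facts
  have hpu : ¬ G.Adj p u := hA.anticomplete_succ i p hp u hu
  have hpv : ¬ G.Adj p v := hA.anticomplete_pred i p hp v hv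
  have hpv' : ¬ G.Adj p v' := hA.anticomplete_pred i p hp v' hv'
  have hqu : G.Adj q u := hA.complete_succ (i+1) q hq u (by rwa [e3])
  have hqu' : G.Adj q u' := hA.complete_succ (i+1) q hq u' (by rwa [e3])
  have hqv : ¬ G.Adj q v := hA.anticomplete_succ (i+1) q hq v (by rwa [e4])
  have hqy1 : ¬ G.Adj y1 q := hy1p1 q hq
  -- nonmembership distinctness
  have hy1nu : y1 ≠ u := fun h => hy1A (Set.mem_iUnion.mpr ⟨i+2, h ▸ hu⟩)
  have hy1nq : q ≠ y1 := fun h => hy1A (Set.mem_iUnion.mpr ⟨i+1, h ▸ hq⟩)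
  have hpnv' : p ≠ v' := fun h => (hA.disjoint i (i-2) e6).ne_of_mem hp hv' h
  have hpnu : p ≠ u := fun h => (hA.disjoint i (i+2) e5).ne_of_mem hp hu h
  have hqnv : q ≠ v := fun h => (hA.disjoint (i+1) (i-2) e7).ne_of_mem hq hv h
  by_cases hyy : G.Adj y1 y2
  · -- gem: P4 = p - y1 - v' - u, apex y2
    exact hfree.2 <| gem_embed_s9 G p y1 v' u y2
      ((hy1i p hp).symm) (hy1m v' hv') ((cross v' hv' u hu))
      (hy2i p hp) hyy.symm hy2v' (hy2p u hu)
      hpv' hpu hy1u hpnv' hpnu hy1nu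
  · by_cases huu : G.Adj u u'
    · -- gem: P4 = q - u - v - y1, apex u'
      exact hfree.2 <| gem_embed_s9 G q u v y1 u'
        hqu (cross v hv u hu).symm (hy1m v hv).symm
        hqu'.symm huu.symm (cross v hv u' hu').symm hy1u'.symm
        hqv (fun h => hqy1 h.symm) (fun h => hy1u h.symm)
        hqnv hy1nq (fun h => hy1nu h.symm)
    · -- gem: P4 = y1 - u' - y2 - u, apex v'
      have hy1ny2 : y1 ≠ y2 := fun h => hy1u (h ▸ hy2p u hu)
      have hu'nu : u' ≠ u := fun h => hy1u (h ▸ hy1u')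
      exact hfree.2 <| gem_embed_s9 G y1 u' y2 u v'
        hy1u' (hy2p u' hu').symm (hy2p u hu)
        (hy1m v' hv').symm (cross v' hv' u' hu') hy2v'.symm (cross v' hv' u hu)
        hyy hy1u (fun h => huu h.symm)
        hy1ny2 hy1nu hu'nu
end

section
/- With the standard setup, suppose Y_i is complete to A_{i-2} for some i. Let A'_{i+2} = N(Y_i) ∩ A_{i+2} (the vertices of A_{i+2} with a neighbor in Y_i) and A''_{i+2} = A_{i+2} \ A'_{i+2}. Then (i) there are no edges between A'_{i+2} and A''_{i+2}, and (ii) Y_i is complete to A'_{i+2}. -/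
open SimpleGraph

lemma gem_adj_s10 (a b : Fin 5) : gem.Adj a b ↔ a ≠ b ∧
    ((a=0∧b=1)∨(a=1∧b=0)∨(a=1∧b=2)∨(a=2∧b=1)∨(a=2∧b=3)∨(a=3∧b=2)∨(a=4∧b=0)∨(a=0∧b=4)∨
     (a=4∧b=1)∨(a=1∧b=4)∨(a=4∧b=2)∨(a=2∧b=4)∨(a=4∧b=3)∨(a=3∧b=4)) := by
  rw [gem, SimpleGraph.fromEdgeSet_adj]
  simp only [Set.mem_insert_iff, Set.mem_singleton_iff, Sym2.eq_iff]
  fin_cases a <;> fin_cases b <;> decide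

lemma p5_embed {V : Type*} (G : SimpleGraph V) (v0 v1 v2 v3 v4 : V)
    (d01 : v0 ≠ v1) (d02 : v0 ≠ v2) (d03 : v0 ≠ v3) (d04 : v0 ≠ v4)
    (d12 : v1 ≠ v2) (d13 : v1 ≠ v3) (d14 : v1 ≠ v4)
    (d23 : v2 ≠ v3) (d24 : v2 ≠ v4) (d34 : v3 ≠ v4)
    (e01 : G.Adj v0 v1) (e12 : G.Adj v1 v2) (e23 : G.Adj v2 v3) (e34 : G.Adj v3 v4)
    (n02 : ¬ G.Adj v0 v2) (n03 : ¬ G.Adj v0 v3) (n04 : ¬ G.Adj v0 v4)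
    (n13 : ¬ G.Adj v1 v3) (n14 : ¬ G.Adj v1 v4) (n24 : ¬ G.Adj v2 v4) :
    Nonempty (pathGraph 5 ↪g G) := by
  refine ⟨⟨⟨![v0,v1,v2,v3,v4], ?_⟩, ?_⟩⟩
  · intro a b h
    fin_cases a <;> fin_cases b <;> simp_all <;>
      (first | exact absurd h (by assumption) | exact absurd h.symm (by assumption))
  · intro a b
    fin_cases a <;> fin_cases b <;> simp only [Function.Embedding.coeFn_mk, Matrix.cons_val_zero, Matrix.cons_val_one,
      Matrix.head_cons, Matrix.cons_val_succ, pathGraph_adj] <;>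
      first
        | exact iff_of_true (by first | assumption | exact Adj.symm (by assumption)) (by decide)
        | exact iff_of_false
            (by first | exact G.irrefl | assumption | exact fun h => absurd h.symm (by assumption))
            (by decide)

lemma gem_embed_s10 {V : Type*} (G : SimpleGraph V) (v0 v1 v2 v3 v4 : V)
    (d01 : v0 ≠ v1) (d02 : v0 ≠ v2) (d03 : v0 ≠ v3) (d04 : v0 ≠ v4)
    (d12 : v1 ≠ v2) (d13 : v1 ≠ v3) (d14 : v1 ≠ v4)
    (d23 : v2 ≠ v3) (d24 : v2 ≠ v4) (d34 : v3 ≠ v4)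
    (e01 : G.Adj v0 v1) (e12 : G.Adj v1 v2) (e23 : G.Adj v2 v3)
    (e40 : G.Adj v4 v0) (e41 : G.Adj v4 v1) (e42 : G.Adj v4 v2) (e43 : G.Adj v4 v3)
    (n02 : ¬ G.Adj v0 v2) (n03 : ¬ G.Adj v0 v3) (n13 : ¬ G.Adj v1 v3) :
    Nonempty (gem ↪g G) := by
  refine ⟨⟨⟨![v0,v1,v2,v3,v4], ?_⟩, ?_⟩⟩
  · intro a b h
    fin_cases a <;> fin_cases b <;> simp_all <;>
      (first | exact absurd h (by assumption) | exact absurd h.symm (by assumption))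
  · intro a b
    fin_cases a <;> fin_cases b <;> simp only [Function.Embedding.coeFn_mk, Matrix.cons_val_zero, Matrix.cons_val_one,
      Matrix.head_cons, Matrix.cons_val_succ, gem_adj_s10] <;>
      first
        | exact iff_of_true (by first | assumption | exact Adj.symm (by assumption)) (by decide)
        | exact iff_of_false
            (by first | exact G.irrefl | assumption | exact fun h => absurd h.symm (by assumption))
            (by decide)

/-- Claim 2.6: suppose `Y i` is complete to `A (i-2)`, and let `A' = N(Y i) ∩ A (i+2)` and
`A'' = A (i+2) \ A'`. Then (i) `A'` is anticomplete to `A''` and (ii) `Y i` is complete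
to `A'`. -/
theorem yset_neighbors_split {V : Type*} [Fintype V] (G : SimpleGraph V)
    (hconn : G.Connected) (hfree : P5GemFree G)
    (hC5 : Nonempty (SimpleGraph.cycleGraph 5 ↪g G))
    (A : Fin 5 → Set V) (hA : IsC5Partition G A)
    (hmax : ∀ B : Fin 5 → Set V, IsC5Partition G B → ¬ (⋃ i, A i) ⊂ (⋃ i, B i))
    (i : Fin 5) (hcom : CompleteTo G (Yset G A i) (A (i - 2)))
    (A' A'' : Set V)
    (hA' : A' = {a | a ∈ A (i + 2) ∧ ∃ y ∈ Yset G A i, G.Adj y a})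
    (hA'' : A'' = A (i + 2) \ A') :
    AnticompleteTo G A' A'' ∧ CompleteTo G (Yset G A i) A' := by
  obtain ⟨hP5, hgem⟩ := hfree
  obtain ⟨b, hb⟩ := hA.nonempty (i - 2)
  obtain ⟨c, hc⟩ := hA.nonempty i
  obtain ⟨d, hd⟩ := hA.nonempty (i - 1)
  have e1 : ∀ j : Fin 5, j - 2 - 1 = j + 2 := by decide
  have e2 : ∀ j : Fin 5, j - 1 + 1 = j := by decide
  have e3 : ∀ j : Fin 5, j - 1 - 2 = j + 2 := by decide
  have f1 : ∀ j : Fin 5, j + 2 ≠ j - 2 := by decide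
  have f2 : ∀ j : Fin 5, j + 2 ≠ j := by decide
  have f3 : ∀ j : Fin 5, j - 1 ≠ j := by decide
  have f4 : ∀ j : Fin 5, j - 1 ≠ j + 2 := by decide
  have f5 : ∀ j : Fin 5, j - 1 ≠ j - 2 := by decide
  have f6 : ∀ j : Fin 5, j - 2 ≠ j := by decide
  have dis : ∀ {j k : Fin 5}, j ≠ k → ∀ {x z : V}, x ∈ A j → z ∈ A k → x ≠ z := by
    intro j k hjk x z hx hz e
    exact Set.disjoint_left.mp (hA.disjoint j k hjk) hx (e ▸ hz)
  have neU : ∀ {x : V}, x ∉ (⋃ j, A j) → ∀ {j : Fin 5} {z : V}, z ∈ A j → x ≠ z := by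
    intro x hx j z hz e; exact hx (Set.mem_iUnion.mpr ⟨j, e ▸ hz⟩)
  have hbA2 : ∀ a ∈ A (i + 2), G.Adj b a := by
    intro a ha
    exact hA.complete_pred (i - 2) b hb a (by rw [e1]; exact ha)
  have hdc : G.Adj d c := hA.complete_succ (i - 1) d hd c (by rw [e2]; exact hc)
  have hdA2 : ∀ a ∈ A (i + 2), ¬ G.Adj d a := by
    intro a ha
    exact hA.anticomplete_pred (i - 1) d hd a (by rw [e3]; exact ha)
  have hcA2 : ∀ a ∈ A (i + 2), ¬ G.Adj c a := fun a ha => hA.anticomplete_succ i c hc a ha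
  have hcb : ¬ G.Adj c b := hA.anticomplete_pred i c hc b hb
  have key : ∀ y ∈ Yset G A i, ∀ a, a ∈ A (i + 2) →
      (∃ y' ∈ Yset G A i, G.Adj y' a) → G.Adj y a := by
    rintro y hy a haA ⟨y', hy', hy'a⟩
    by_contra hya
    have hyb : G.Adj y b := hcom y hy b hb
    have hy'b : G.Adj y' b := hcom y' hy' b hb
    obtain ⟨hyU, hyAi, hyAm1, _, _, hyEx2, _⟩ := hy
    obtain ⟨hy'U, hy'Ai, _, _, _, _, _⟩ := hy' 
    have hyc : G.Adj y c := hyAi c hc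
    have hy'c : G.Adj y' c := hy'Ai c hc
    have hyd : ¬ G.Adj y d := hyAm1 d hd
    by_cases hyy' : G.Adj y y'
    · -- gem on (a, b, y, c) with apex y'
      refine hgem (gem_embed_s10 G a b y c y' ?_ ?_ ?_ ?_ ?_ ?_ ?_ ?_ ?_ ?_ ?_ ?_ ?_ ?_ ?_ ?_ ?_ ?_ ?_ ?_)
      · exact dis (f1 i) haA hb
      · exact (neU hyU haA).symm
      · exact dis (f2 i) haA hc
      · exact (neU hy'U haA).symm
      · exact (neU hyU hb).symm
      · exact dis (f6 i) hb hc
      · exact (neU hy'U hb).symm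
      · exact neU hyU hc
      · exact hyy'.ne
      · exact (neU hy'U hc).symm
      · exact (hbA2 a haA).symm
      · exact hyb.symm
      · exact hyc
      · exact hy'a
      · exact hy'b
      · exact hyy'.symm
      · exact hy'c
      · exact fun h => hya h.symm
      · exact fun h => hcA2 a haA h.symm
      · exact fun h => hcb h.symm
    · have hyne : y ≠ y' := fun e => hya (e ▸ hy'a)
      obtain ⟨ay, hayA, hyay⟩ := hyEx2
      have hayne : ay ≠ a := fun e => hya (e ▸ hyay)
      by_cases haya : G.Adj ay a
      · -- P5 : d - c - y - ay - a
        refine hP5 (p5_embed G d c y ay a ?_ ?_ ?_ ?_ ?_ ?_ ?_ ?_ ?_ ?_ ?_ ?_ ?_ ?_ ?_ ?_ ?_ ?_ ?_ ?_)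
        · exact dis (f3 i) hd hc
        · exact (neU hyU hd).symm
        · exact dis (f4 i) hd hayA
        · exact dis (f4 i) hd haA
        · exact (neU hyU hc).symm
        · exact dis (f2 i).symm hc hayA
        · exact dis (f2 i).symm hc haA
        · exact neU hyU hayA
        · exact neU hyU haA
        · exact hayne
        · exact hdc
        · exact hyc.symm
        · exact hyay
        · exact haya
        · exact fun h => hyd h.symm
        · exact hdA2 ay hayA
        · exact hdA2 a haA
        · exact hcA2 ay hayA
        · exact hcA2 a haA
        · exact hya
      · by_cases hayy' : G.Adj y' ay
        · -- gem on (y, ay, y', a) with apex b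
          refine hgem (gem_embed_s10 G y ay y' a b ?_ ?_ ?_ ?_ ?_ ?_ ?_ ?_ ?_ ?_ ?_ ?_ ?_ ?_ ?_ ?_ ?_ ?_ ?_ ?_)
          · exact neU hyU hayA
          · exact hyne
          · exact neU hyU haA
          · exact neU hyU hb
          · exact (neU hy'U hayA).symm
          · exact hayne
          · exact dis (f1 i) hayA hb
          · exact neU hy'U haA
          · exact neU hy'U hb
          · exact dis (f1 i) haA hb
          · exact hyay
          · exact hayy'.symm
          · exact hy'a
          · exact hyb.symm
          · exact hbA2 ay hayA
          · exact hy'b.symm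
          · exact hbA2 a haA
          · exact hyy'
          · exact hya
          · exact haya
        · -- P5 : ay - y - c - y' - a
          refine hP5 (p5_embed G ay y c y' a ?_ ?_ ?_ ?_ ?_ ?_ ?_ ?_ ?_ ?_ ?_ ?_ ?_ ?_ ?_ ?_ ?_ ?_ ?_ ?_)
          · exact (neU hyU hayA).symm
          · exact dis (f2 i) hayA hc
          · exact (neU hy'U hayA).symm
          · exact hayne
          · exact neU hyU hc
          · exact hyne
          · exact neU hyU haA
          · exact (neU hy'U hc).symm
          · exact dis (f2 i).symm hc haA
          · exact (hy'a.ne)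
          · exact hyay.symm
          · exact hyc
          · exact hy'c.symm
          · exact hy'a
          · exact fun h => hcA2 ay hayA h.symm
          · exact fun h => hayy' h.symm
          · exact haya
          · exact hyy'
          · exact hya
          · exact hcA2 a haA
  constructor
  · intro a' ha' a'' ha'' hadj
    rw [hA'] at ha'
    rw [hA'', hA'] at ha''
    obtain ⟨ha'A, y, hy, hya'⟩ := ha'
    have hyc : G.Adj y c := hy.2.1 c hc
    have hyd : ¬ G.Adj y d := hy.2.2.1 d hd
    have hna'' : ¬ G.Adj y a'' := fun h => ha''.2 ⟨ha''.1, y, hy, h⟩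
    -- P5 : d - c - y - a' - a''
    refine hP5 (p5_embed G d c y a' a'' ?_ ?_ ?_ ?_ ?_ ?_ ?_ ?_ ?_ ?_ ?_ ?_ ?_ ?_ ?_ ?_ ?_ ?_ ?_ ?_)
    · exact dis (f3 i) hd hc
    · exact (neU hy.1 hd).symm
    · exact dis (f4 i) hd ha'A
    · exact dis (f4 i) hd ha''.1
    · exact (neU hy.1 hc).symm
    · exact dis (f2 i).symm hc ha'A
    · exact dis (f2 i).symm hc ha''.1
    · exact neU hy.1 ha'A
    · exact neU hy.1 ha''.1
    · exact hadj.ne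
    · exact hdc
    · exact hyc.symm
    · exact hya'
    · exact hadj
    · exact fun h => hyd h.symm
    · exact hdA2 a' ha'A
    · exact hdA2 a'' ha''.1
    · exact hcA2 a' ha'A
    · exact hcA2 a'' ha''.1
    · exact hna''
  · intro y hy a ha
    rw [hA'] at ha
    exact key y hy a ha.1 ha.2
end

section
/- With the standard setup, suppose Y_{i-2} and Y_{i+2} are both non-empty for some i, and let A_i^- = N(Y_{i-2}) ∩ A_i and A_i^+ = N(Y_{i+2}) ∩ A_i. Then: (d) Y_{i-1} ∪ Y_{i+1} = ∅; (e) every vertex in Y_i is pure (complete to A_{i-2} ∪ A_{i+2}); and (f) at least one of the sets A_i \ (A_i^- ∪ A_i^+) and Y_i is empty. -/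
open SimpleGraph

section helpers
variable {V : Type*} {G : SimpleGraph V} {A : Fin 5 → Set V}

lemma mk_p5 (a b c d e : V)
 (e1 : G.Adj a b) (e2 : G.Adj b c) (e3 : G.Adj c d) (e4 : G.Adj d e)
 (n1 : ¬G.Adj a c) (n2 : ¬G.Adj a d) (n3 : ¬G.Adj a e)
 (n4 : ¬G.Adj b d) (n5 : ¬G.Adj b e) (n6 : ¬G.Adj c e)
 (m1 : a ≠ c) (m2 : a ≠ d) (m3 : a ≠ e) (m4 : b ≠ d) (m5 : b ≠ e) (m6 : c ≠ e) :
 Nonempty (pathGraph 5 ↪g G) := by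
  refine ⟨⟨⟨![a,b,c,d,e], ?_⟩, ?_⟩⟩
  · intro x y h
    fin_cases x <;> fin_cases y <;>
      simp_all [G.ne_of_adj e1, G.ne_of_adj e2, G.ne_of_adj e3, G.ne_of_adj e4,
        (G.ne_of_adj e1).symm, (G.ne_of_adj e2).symm, (G.ne_of_adj e3).symm,
        (G.ne_of_adj e4).symm, m1, m2, m3, m4, m5, m6, m1.symm, m2.symm, m3.symm,
        m4.symm, m5.symm, m6.symm]
  · intro x y
    change G.Adj (![a,b,c,d,e] x) (![a,b,c,d,e] y) ↔ _
    fin_cases x <;> fin_cases y <;>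
      simp_all [pathGraph_adj, e1, e2, e3, e4, n1, n2, n3, n4, n5, n6, G.adj_comm,
        G.irrefl] <;> decide

lemma mk_gem (a b c d e : V)
 (e1 : G.Adj a b) (e2 : G.Adj b c) (e3 : G.Adj c d)
 (e4 : G.Adj e a) (e5 : G.Adj e b) (e6 : G.Adj e c) (e7 : G.Adj e d)
 (n1 : ¬G.Adj a c) (n2 : ¬G.Adj a d) (n3 : ¬G.Adj b d)
 (m1 : a ≠ c) (m2 : a ≠ d) (m3 : b ≠ d) :
 Nonempty (gem ↪g G) := by
  refine ⟨⟨⟨![a,b,c,d,e], ?_⟩, ?_⟩⟩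
  · intro x y h
    fin_cases x <;> fin_cases y <;>
      simp_all [G.ne_of_adj e1, G.ne_of_adj e2, G.ne_of_adj e3, G.ne_of_adj e4,
        G.ne_of_adj e5, G.ne_of_adj e6, G.ne_of_adj e7,
        (G.ne_of_adj e1).symm, (G.ne_of_adj e2).symm, (G.ne_of_adj e3).symm,
        (G.ne_of_adj e4).symm, (G.ne_of_adj e5).symm, (G.ne_of_adj e6).symm,
        (G.ne_of_adj e7).symm, m1, m2, m3, m1.symm, m2.symm, m3.symm]
  · intro x y
    change G.Adj (![a,b,c,d,e] x) (![a,b,c,d,e] y) ↔ _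
    fin_cases x <;> fin_cases y <;>
      simp_all [gem, e1, e2, e3, e4, e5, e6, e7, e1.symm, e2.symm, e3.symm, e4.symm,
        e5.symm, e6.symm, e7.symm, n1, n2, n3, G.adj_comm, G.irrefl,
        Sym2.eq, Sym2.rel_iff']

lemma memA_congr {b : V} {j k : Fin 5} (h : j = k) (hb : b ∈ A k) : b ∈ A j := by
  rw [h]; exact hb

lemma adjA (hA : IsC5Partition G A) {a b : V} {j k : Fin 5} (h : k = j + 1)
    (ha : a ∈ A j) (hb : b ∈ A k) : G.Adj a b :=
  hA.complete_succ j a ha b (memA_congr h.symm hb)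

lemma nadjA (hA : IsC5Partition G A) {a b : V} {j k : Fin 5} (h : k = j + 2)
    (ha : a ∈ A j) (hb : b ∈ A k) : ¬ G.Adj a b :=
  hA.anticomplete_succ j a ha b (memA_congr h.symm hb)

lemma neA (hA : IsC5Partition G A) {a b : V} {j k : Fin 5} (h : j ≠ k)
    (ha : a ∈ A j) (hb : b ∈ A k) : a ≠ b :=
  fun he => Set.disjoint_left.mp (hA.disjoint j k h) ha (he ▸ hb)

lemma Y_congr {y : V} {j k : Fin 5} (h : j = k) (hy : y ∈ Yset G A k) :
    y ∈ Yset G A j := by rw [h]; exact hy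

lemma Y_adj {y b : V} {j k : Fin 5} (hy : y ∈ Yset G A j) (h : k = j) (hb : b ∈ A k) :
    G.Adj y b := hy.2.1 b (memA_congr h.symm hb)

lemma Y_nadj_pred {y b : V} {j k : Fin 5} (hy : y ∈ Yset G A j) (h : k = j - 1)
    (hb : b ∈ A k) : ¬ G.Adj y b := hy.2.2.1 b (memA_congr h.symm hb)

lemma Y_nadj_succ {y b : V} {j k : Fin 5} (hy : y ∈ Yset G A j) (h : k = j + 1)
    (hb : b ∈ A k) : ¬ G.Adj y b := hy.2.2.2.1 b (memA_congr h.symm hb)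

lemma Y_neA {y b : V} {j k : Fin 5} (hy : y ∈ Yset G A j) (hb : b ∈ A k) : y ≠ b :=
  fun he => hy.1 (by rw [he]; exact Set.mem_iUnion.2 ⟨k, hb⟩)

lemma ne_adj_nadj {u v z : V} (h1 : G.Adj u z) (h2 : ¬ G.Adj v z) : u ≠ v :=
  fun he => h2 (he ▸ h1)

end helpers

lemma adjYY {V : Type*} {G : SimpleGraph V} {A : Fin 5 → Set V} (hA : IsC5Partition G A)
    (hfree : P5GemFree G) (i : Fin 5) {u v : V}
    (hu : u ∈ Yset G A i) (hv : v ∈ Yset G A (i + 1)) : G.Adj u v := by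
  by_contra hne
  obtain ⟨a4, ha4, hua4⟩ := hu.2.2.2.2.2.1
  obtain ⟨a1, ha1', hva1⟩ := hv.2.2.2.2.1
  have ha1 : a1 ∈ A (i + 4) := memA_congr ((by decide : ∀ z : Fin 5, z + 4 = (z + 1) - 2) i) ha1'
  obtain ⟨a3, ha3⟩ := hA.nonempty (i + 1)
  exact hfree.1 (mk_p5 u a4 a3 v a1
    hua4
    (adjA hA ((by decide : ∀ z : Fin 5, z + 2 = (z + 1) + 1) i) ha3 ha4).symm
    (Y_adj hv ((by decide : ∀ z : Fin 5, z + 1 = z + 1) i) ha3).symm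
    hva1
    (Y_nadj_succ hu ((by decide : ∀ z : Fin 5, z + 1 = (z) + 1) i) ha3)
    hne
    (Y_nadj_pred hu ((by decide : ∀ z : Fin 5, z + 4 = (z) - 1) i) ha1)
    (fun hh => (Y_nadj_succ hv ((by decide : ∀ z : Fin 5, z + 2 = (z + 1) + 1) i) ha4) hh.symm)
    (nadjA hA ((by decide : ∀ z : Fin 5, z + 4 = (z + 2) + 2) i) ha4 ha1)
    (fun hh => (nadjA hA ((by decide : ∀ z : Fin 5, z + 1 = (z + 4) + 2) i) ha1 ha3) hh.symm)
    (Y_neA hu ha3)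
    (ne_adj_nadj hva1 (Y_nadj_pred hu ((by decide : ∀ z : Fin 5, z + 4 = (z) - 1) i) ha1)).symm
    (Y_neA hu ha1)
    (Y_neA hv ha4).symm
    (neA hA ((by decide : ∀ z : Fin 5, z + 2 ≠ z + 4) i) ha4 ha1)
    (neA hA ((by decide : ∀ z : Fin 5, z + 1 ≠ z + 4) i) ha3 ha1))

lemma noYYY {V : Type*} {G : SimpleGraph V} {A : Fin 5 → Set V} (hA : IsC5Partition G A)
    (hfree : P5GemFree G) (i : Fin 5) {u v w : V}
    (hu : u ∈ Yset G A i) (hv : v ∈ Yset G A (i + 1)) (hw : w ∈ Yset G A (i + 2)) :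
    False := by
  have Euv : G.Adj u v := adjYY hA hfree i hu hv
  have Evw : G.Adj v w := adjYY hA hfree (i + 1) hv
    (Y_congr ((by decide : ∀ z : Fin 5, (z + 1) + 1 = z + 2) i) hw)
  obtain ⟨a4u, ha4u, Eu_a4u⟩ := hu.2.2.2.2.2.1
  obtain ⟨a0u, ha0u', Eu_a0u⟩ := hu.2.2.2.2.1
  have ha0u : a0u ∈ A (i + 3) := memA_congr ((by decide : ∀ z : Fin 5, z + 3 = z - 2) i) ha0u'
  obtain ⟨a0v, ha0v', Ev_a0v⟩ := hv.2.2.2.2.2.1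
  have ha0v : a0v ∈ A (i + 3) := memA_congr ((by decide : ∀ z : Fin 5, z + 3 = (z + 1) + 2) i) ha0v'
  obtain ⟨a1v, ha1v', Ev_a1v⟩ := hv.2.2.2.2.1
  have ha1v : a1v ∈ A (i + 4) := memA_congr ((by decide : ∀ z : Fin 5, z + 4 = (z + 1) - 2) i) ha1v'
  obtain ⟨a1w, ha1w', Ew_a1w⟩ := hw.2.2.2.2.2.1
  have ha1w : a1w ∈ A (i + 4) := memA_congr ((by decide : ∀ z : Fin 5, z + 4 = (z + 2) + 2) i) ha1w'
  obtain ⟨a2w, ha2w', Ew_a2w⟩ := hw.2.2.2.2.1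
  have ha2w : a2w ∈ A (i + 0) := memA_congr ((by decide : ∀ z : Fin 5, z + 0 = (z + 2) - 2) i) ha2w'
  obtain ⟨a3, ha3⟩ := hA.nonempty (i + 1)
  by_cases HC1 : G.Adj u w
  · -- adj case
    exact hfree.2 (mk_gem a2w w a4u a0u u
      (Ew_a2w).symm
      (Y_adj hw ((by decide : ∀ z : Fin 5, z + 2 = z + 2) i) ha4u)
      (adjA hA ((by decide : ∀ z : Fin 5, z + 3 = (z + 2) + 1) i) ha4u ha0u)
      (Y_adj hu ((by decide : ∀ z : Fin 5, z + 0 = z) i) ha2w)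
      HC1
      Eu_a4u
      Eu_a0u
      (nadjA hA ((by decide : ∀ z : Fin 5, z + 2 = (z + 0) + 2) i) ha2w ha4u)
      (fun hh => (nadjA hA ((by decide : ∀ z : Fin 5, z + 0 = (z + 3) + 2) i) ha0u ha2w) hh.symm)
      (Y_nadj_succ hw ((by decide : ∀ z : Fin 5, z + 3 = (z + 2) + 1) i) ha0u)
      (neA hA ((by decide : ∀ z : Fin 5, z + 0 ≠ z + 2) i) ha2w ha4u)
      (neA hA ((by decide : ∀ z : Fin 5, z + 0 ≠ z + 3) i) ha2w ha0u)
      (Y_neA hw ha0u))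
  · -- nonadj case
    by_cases HC2 : G.Adj a0v u
    · -- adj case
      exact hfree.2 (mk_gem a4u u v a1v a0v
        (Eu_a4u).symm
        Euv
        Ev_a1v
        (adjA hA ((by decide : ∀ z : Fin 5, z + 3 = (z + 2) + 1) i) ha4u ha0v).symm
        HC2
        (Ev_a0v).symm
        (adjA hA ((by decide : ∀ z : Fin 5, z + 4 = (z + 3) + 1) i) ha0v ha1v)
        (fun hh => (Y_nadj_succ hv ((by decide : ∀ z : Fin 5, z + 2 = (z + 1) + 1) i) ha4u) hh.symm)
        (nadjA hA ((by decide : ∀ z : Fin 5, z + 4 = (z + 2) + 2) i) ha4u ha1v)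
        (Y_nadj_pred hu ((by decide : ∀ z : Fin 5, z + 4 = (z) - 1) i) ha1v)
        (Y_neA hv ha4u).symm
        (neA hA ((by decide : ∀ z : Fin 5, z + 2 ≠ z + 4) i) ha4u ha1v)
        (Y_neA hu ha1v))
    · -- nonadj case
      by_cases HC3 : G.Adj a0u v
      · -- adj case
        exact hfree.2 (mk_gem a4u u v a1v a0u
          (Eu_a4u).symm
          Euv
          Ev_a1v
          (adjA hA ((by decide : ∀ z : Fin 5, z + 3 = (z + 2) + 1) i) ha4u ha0u).symm
          (Eu_a0u).symm
          HC3
          (adjA hA ((by decide : ∀ z : Fin 5, z + 4 = (z + 3) + 1) i) ha0u ha1v)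
          (fun hh => (Y_nadj_succ hv ((by decide : ∀ z : Fin 5, z + 2 = (z + 1) + 1) i) ha4u) hh.symm)
          (nadjA hA ((by decide : ∀ z : Fin 5, z + 4 = (z + 2) + 2) i) ha4u ha1v)
          (Y_nadj_pred hu ((by decide : ∀ z : Fin 5, z + 4 = (z) - 1) i) ha1v)
          (Y_neA hv ha4u).symm
          (neA hA ((by decide : ∀ z : Fin 5, z + 2 ≠ z + 4) i) ha4u ha1v)
          (Y_neA hu ha1v))
      · -- nonadj case
        by_cases HC4 : G.Adj a1w v
        · -- adj case
          exact hfree.2 (mk_gem a2w w v a0v a1w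
            (Ew_a2w).symm
            (Evw).symm
            Ev_a0v
            (adjA hA ((by decide : ∀ z : Fin 5, z + 0 = (z + 4) + 1) i) ha1w ha2w)
            (Ew_a1w).symm
            HC4
            (adjA hA ((by decide : ∀ z : Fin 5, z + 4 = (z + 3) + 1) i) ha0v ha1w).symm
            (fun hh => (Y_nadj_pred hv ((by decide : ∀ z : Fin 5, z + 0 = (z + 1) - 1) i) ha2w) hh.symm)
            (fun hh => (nadjA hA ((by decide : ∀ z : Fin 5, z + 0 = (z + 3) + 2) i) ha0v ha2w) hh.symm)
            (Y_nadj_succ hw ((by decide : ∀ z : Fin 5, z + 3 = (z + 2) + 1) i) ha0v)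
            (Y_neA hv ha2w).symm
            (neA hA ((by decide : ∀ z : Fin 5, z + 0 ≠ z + 3) i) ha2w ha0v)
            (Y_neA hw ha0v))
        · -- nonadj case
          exact hfree.1 (mk_p5 v a3 a2w a1w a0u
            (Y_adj hv ((by decide : ∀ z : Fin 5, z + 1 = z + 1) i) ha3)
            (adjA hA ((by decide : ∀ z : Fin 5, z + 1 = (z + 0) + 1) i) ha2w ha3).symm
            (adjA hA ((by decide : ∀ z : Fin 5, z + 0 = (z + 4) + 1) i) ha1w ha2w).symm
            (adjA hA ((by decide : ∀ z : Fin 5, z + 4 = (z + 3) + 1) i) ha0u ha1w).symm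
            (Y_nadj_pred hv ((by decide : ∀ z : Fin 5, z + 0 = (z + 1) - 1) i) ha2w)
            (fun hh => HC4 hh.symm)
            (fun hh => HC3 hh.symm)
            (fun hh => (nadjA hA ((by decide : ∀ z : Fin 5, z + 1 = (z + 4) + 2) i) ha1w ha3) hh.symm)
            (nadjA hA ((by decide : ∀ z : Fin 5, z + 3 = (z + 1) + 2) i) ha3 ha0u)
            (fun hh => (nadjA hA ((by decide : ∀ z : Fin 5, z + 0 = (z + 3) + 2) i) ha0u ha2w) hh.symm)
            (Y_neA hv ha2w)
            (Y_neA hv ha1w)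
            (Y_neA hv ha0u)
            (neA hA ((by decide : ∀ z : Fin 5, z + 1 ≠ z + 4) i) ha3 ha1w)
            (neA hA ((by decide : ∀ z : Fin 5, z + 1 ≠ z + 3) i) ha3 ha0u)
            (neA hA ((by decide : ∀ z : Fin 5, z + 0 ≠ z + 3) i) ha2w ha0u))

lemma pureY {V : Type*} {G : SimpleGraph V} {A : Fin 5 → Set V} (hA : IsC5Partition G A)
    (hfree : P5GemFree G) (i : Fin 5) {x ym yp : V} (hx : x ∈ Yset G A i)
    (hym : ym ∈ Yset G A (i + 3)) (hyp : yp ∈ Yset G A (i + 2)) :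
    IsPureVertex G A i x := by
  have Eyp_ym : G.Adj yp ym := adjYY hA hfree (i + 2) hyp
    (Y_congr ((by decide : ∀ z : Fin 5, (z + 2) + 1 = z + 3) i) hym)
  refine ⟨?_, ?_⟩
  · rcases hx.2.2.2.2.2.2 with hc3 | hc2
    · exact hc3
    · intro a ha'
      by_contra hax
      have ha : a ∈ A (i + 3) := (memA_congr ((by decide : ∀ z : Fin 5, z + 3 = z - 2) i) ha')
      obtain ⟨b3, hb3', Ex_b3⟩ := hx.2.2.2.2.1
      have hb3 : b3 ∈ A (i + 3) := (memA_congr ((by decide : ∀ z : Fin 5, z + 3 = z - 2) i) hb3')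
      obtain ⟨a2, ha2⟩ := hA.nonempty (i + 2)
      obtain ⟨al1, hal1', Eym_al1⟩ := hym.2.2.2.2.1
      have hal1 : al1 ∈ A (i + 1) := (memA_congr ((by decide : ∀ z : Fin 5, z + 1 = (z + 3) - 2) i) hal1')
      obtain ⟨al0m, hal0m', Eym_al0m⟩ := hym.2.2.2.2.2.1
      have hal0m : al0m ∈ A (i + 0) := (memA_congr ((by decide : ∀ z : Fin 5, z + 0 = (z + 3) + 2) i) hal0m')
      obtain ⟨al4, hal4', Eyp_al4⟩ := hyp.2.2.2.2.2.1
      have hal4 : al4 ∈ A (i + 4) := (memA_congr ((by decide : ∀ z : Fin 5, z + 4 = (z + 2) + 2) i) hal4')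
      obtain ⟨al0p, hal0p', Eyp_al0p⟩ := hyp.2.2.2.2.1
      have hal0p : al0p ∈ A (i + 0) := (memA_congr ((by decide : ∀ z : Fin 5, z + 0 = (z + 2) - 2) i) hal0p')
      obtain ⟨a0, ha0⟩ := hA.nonempty (i + 0)
      obtain ⟨a1, ha1⟩ := hA.nonempty (i + 1)
      obtain ⟨a4, ha4⟩ := hA.nonempty (i + 4)
      rcases hym.2.2.2.2.2.2 with hcm | hcm
      · rcases hyp.2.2.2.2.2.2 with hcp | hcp
        · -- ms A1, ps A0
          exact hfree.2 (mk_gem a1 ym yp al4 al0m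
            ((hcm a1 (memA_congr ((by decide : ∀ z : Fin 5, (z + 3) - 2 = z + 1) i) ha1))).symm
            (Eyp_ym).symm
            Eyp_al4
            (adjA hA ((by decide : ∀ z : Fin 5, z + 1 = (z + 0) + 1) i) hal0m ha1)
            (Eym_al0m).symm
            ((hcp al0m (memA_congr ((by decide : ∀ z : Fin 5, (z + 2) - 2 = z + 0) i) hal0m))).symm
            (adjA hA ((by decide : ∀ z : Fin 5, z + 0 = (z + 4) + 1) i) hal4 hal0m).symm
            (fun hh => (Y_nadj_pred hyp ((by decide : ∀ z : Fin 5, z + 1 = (z + 2) - 1) i) ha1) hh.symm)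
            (fun hh => (nadjA hA ((by decide : ∀ z : Fin 5, z + 1 = (z + 4) + 2) i) hal4 ha1) hh.symm)
            (Y_nadj_succ hym ((by decide : ∀ z : Fin 5, z + 4 = (z + 3) + 1) i) hal4)
            (Y_neA hyp ha1).symm
            (neA hA ((by decide : ∀ z : Fin 5, z + 1 ≠ z + 4) i) ha1 hal4)
            (Y_neA hym hal4))
        · -- ms A1, ps A4
          by_cases HC1 : G.Adj x ym
          · -- adj case
            exact hfree.2 (mk_gem b3 x al0m a1 ym
              (Ex_b3).symm
              (Y_adj hx ((by decide : ∀ z : Fin 5, z + 0 = z) i) hal0m)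
              (adjA hA ((by decide : ∀ z : Fin 5, z + 1 = (z + 0) + 1) i) hal0m ha1)
              (Y_adj hym ((by decide : ∀ z : Fin 5, z + 3 = z + 3) i) hb3)
              (HC1).symm
              Eym_al0m
              (hcm a1 (memA_congr ((by decide : ∀ z : Fin 5, (z + 3) - 2 = z + 1) i) ha1))
              (nadjA hA ((by decide : ∀ z : Fin 5, z + 0 = (z + 3) + 2) i) hb3 hal0m)
              (fun hh => (nadjA hA ((by decide : ∀ z : Fin 5, z + 3 = (z + 1) + 2) i) ha1 hb3) hh.symm)
              (Y_nadj_succ hx ((by decide : ∀ z : Fin 5, z + 1 = (z) + 1) i) ha1)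
              (neA hA ((by decide : ∀ z : Fin 5, z + 3 ≠ z + 0) i) hb3 hal0m)
              (neA hA ((by decide : ∀ z : Fin 5, z + 3 ≠ z + 1) i) hb3 ha1)
              (Y_neA hx ha1))
          · -- nonadj case
            by_cases HC2 : G.Adj x yp
            · -- adj case
              exact hfree.2 (mk_gem b3 a2 yp al0p x
                (adjA hA ((by decide : ∀ z : Fin 5, z + 3 = (z + 2) + 1) i) ha2 hb3).symm
                (Y_adj hyp ((by decide : ∀ z : Fin 5, z + 2 = z + 2) i) ha2).symm
                Eyp_al0p
                Ex_b3
                (hc2 a2 ha2)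
                HC2
                (Y_adj hx ((by decide : ∀ z : Fin 5, z + 0 = z) i) hal0p)
                (fun hh => (Y_nadj_succ hyp ((by decide : ∀ z : Fin 5, z + 3 = (z + 2) + 1) i) hb3) hh.symm)
                (nadjA hA ((by decide : ∀ z : Fin 5, z + 0 = (z + 3) + 2) i) hb3 hal0p)
                (fun hh => (nadjA hA ((by decide : ∀ z : Fin 5, z + 2 = (z + 0) + 2) i) hal0p ha2) hh.symm)
                (Y_neA hyp hb3).symm
                (neA hA ((by decide : ∀ z : Fin 5, z + 3 ≠ z + 0) i) hb3 hal0p)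
                (neA hA ((by decide : ∀ z : Fin 5, z + 2 ≠ z + 0) i) ha2 hal0p))
            · -- nonadj case
              by_cases HC3 : G.Adj a0 ym
              · -- adj case
                by_cases HC4 : G.Adj al0p ym
                · -- adj case
                  exact hfree.2 (mk_gem a1 ym yp a4 al0p
                    ((hcm a1 (memA_congr ((by decide : ∀ z : Fin 5, (z + 3) - 2 = z + 1) i) ha1))).symm
                    (Eyp_ym).symm
                    (hcp a4 (memA_congr ((by decide : ∀ z : Fin 5, (z + 2) + 2 = z + 4) i) ha4))
                    (adjA hA ((by decide : ∀ z : Fin 5, z + 1 = (z + 0) + 1) i) hal0p ha1)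
                    HC4
                    (Eyp_al0p).symm
                    (adjA hA ((by decide : ∀ z : Fin 5, z + 0 = (z + 4) + 1) i) ha4 hal0p).symm
                    (fun hh => (Y_nadj_pred hyp ((by decide : ∀ z : Fin 5, z + 1 = (z + 2) - 1) i) ha1) hh.symm)
                    (fun hh => (nadjA hA ((by decide : ∀ z : Fin 5, z + 1 = (z + 4) + 2) i) ha4 ha1) hh.symm)
                    (Y_nadj_succ hym ((by decide : ∀ z : Fin 5, z + 4 = (z + 3) + 1) i) ha4)
                    (Y_neA hyp ha1).symm
                    (neA hA ((by decide : ∀ z : Fin 5, z + 1 ≠ z + 4) i) ha1 ha4)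
                    (Y_neA hym ha4))
                · -- nonadj case
                  exact hfree.1 (mk_p5 x al0p yp ym a
                    (Y_adj hx ((by decide : ∀ z : Fin 5, z + 0 = z) i) hal0p)
                    (Eyp_al0p).symm
                    Eyp_ym
                    (Y_adj hym ((by decide : ∀ z : Fin 5, z + 3 = z + 3) i) ha)
                    HC2
                    HC1
                    hax
                    HC4
                    (fun hh => (nadjA hA ((by decide : ∀ z : Fin 5, z + 0 = (z + 3) + 2) i) ha hal0p) hh.symm)
                    (Y_nadj_succ hyp ((by decide : ∀ z : Fin 5, z + 3 = (z + 2) + 1) i) ha)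
                    (ne_adj_nadj Eyp_ym HC1).symm
                    (ne_adj_nadj (Eyp_ym).symm HC2).symm
                    (Y_neA hx ha)
                    (Y_neA hym hal0p).symm
                    (neA hA ((by decide : ∀ z : Fin 5, z + 0 ≠ z + 3) i) hal0p ha)
                    (Y_neA hyp ha))
              · -- nonadj case
                exact hfree.1 (mk_p5 x a0 a1 ym a
                  (Y_adj hx ((by decide : ∀ z : Fin 5, z + 0 = z) i) ha0)
                  (adjA hA ((by decide : ∀ z : Fin 5, z + 1 = (z + 0) + 1) i) ha0 ha1)
                  ((hcm a1 (memA_congr ((by decide : ∀ z : Fin 5, (z + 3) - 2 = z + 1) i) ha1))).symm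
                  (Y_adj hym ((by decide : ∀ z : Fin 5, z + 3 = z + 3) i) ha)
                  (Y_nadj_succ hx ((by decide : ∀ z : Fin 5, z + 1 = (z) + 1) i) ha1)
                  HC1
                  hax
                  HC3
                  (fun hh => (nadjA hA ((by decide : ∀ z : Fin 5, z + 0 = (z + 3) + 2) i) ha ha0) hh.symm)
                  (nadjA hA ((by decide : ∀ z : Fin 5, z + 3 = (z + 1) + 2) i) ha1 ha)
                  (Y_neA hx ha1)
                  (ne_adj_nadj (Eyp_ym).symm HC2).symm
                  (Y_neA hx ha)
                  (Y_neA hym ha0).symm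
                  (neA hA ((by decide : ∀ z : Fin 5, z + 0 ≠ z + 3) i) ha0 ha)
                  (neA hA ((by decide : ∀ z : Fin 5, z + 1 ≠ z + 3) i) ha1 ha))
      · rcases hyp.2.2.2.2.2.2 with hcp | hcp
        · -- ms A0, ps A0
          exact hfree.2 (mk_gem al1 ym yp al4 a0
            (Eym_al1).symm
            (Eyp_ym).symm
            Eyp_al4
            (adjA hA ((by decide : ∀ z : Fin 5, z + 1 = (z + 0) + 1) i) ha0 hal1)
            ((hcm a0 (memA_congr ((by decide : ∀ z : Fin 5, (z + 3) + 2 = z + 0) i) ha0))).symm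
            ((hcp a0 (memA_congr ((by decide : ∀ z : Fin 5, (z + 2) - 2 = z + 0) i) ha0))).symm
            (adjA hA ((by decide : ∀ z : Fin 5, z + 0 = (z + 4) + 1) i) hal4 ha0).symm
            (fun hh => (Y_nadj_pred hyp ((by decide : ∀ z : Fin 5, z + 1 = (z + 2) - 1) i) hal1) hh.symm)
            (fun hh => (nadjA hA ((by decide : ∀ z : Fin 5, z + 1 = (z + 4) + 2) i) hal4 hal1) hh.symm)
            (Y_nadj_succ hym ((by decide : ∀ z : Fin 5, z + 4 = (z + 3) + 1) i) hal4)
            (Y_neA hyp hal1).symm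
            (neA hA ((by decide : ∀ z : Fin 5, z + 1 ≠ z + 4) i) hal1 hal4)
            (Y_neA hym hal4))
        · -- ms A0, ps A4
          exact hfree.2 (mk_gem a4 yp ym al1 al0p
            ((hcp a4 (memA_congr ((by decide : ∀ z : Fin 5, (z + 2) + 2 = z + 4) i) ha4))).symm
            Eyp_ym
            Eym_al1
            (adjA hA ((by decide : ∀ z : Fin 5, z + 0 = (z + 4) + 1) i) ha4 hal0p).symm
            (Eyp_al0p).symm
            ((hcm al0p (memA_congr ((by decide : ∀ z : Fin 5, (z + 3) + 2 = z + 0) i) hal0p))).symm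
            (adjA hA ((by decide : ∀ z : Fin 5, z + 1 = (z + 0) + 1) i) hal0p hal1)
            (fun hh => (Y_nadj_succ hym ((by decide : ∀ z : Fin 5, z + 4 = (z + 3) + 1) i) ha4) hh.symm)
            (nadjA hA ((by decide : ∀ z : Fin 5, z + 1 = (z + 4) + 2) i) ha4 hal1)
            (Y_nadj_pred hyp ((by decide : ∀ z : Fin 5, z + 1 = (z + 2) - 1) i) hal1)
            (Y_neA hym ha4).symm
            (neA hA ((by decide : ∀ z : Fin 5, z + 4 ≠ z + 1) i) ha4 hal1)
            (Y_neA hyp hal1))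
  · rcases hx.2.2.2.2.2.2 with hc3 | hc2
    · intro a ha
      by_contra hax
      obtain ⟨b2, hb2, Ex_b2⟩ := hx.2.2.2.2.2.1
      obtain ⟨a3, ha3⟩ := hA.nonempty (i + 3)
      obtain ⟨al1, hal1', Eym_al1⟩ := hym.2.2.2.2.1
      have hal1 : al1 ∈ A (i + 1) := (memA_congr ((by decide : ∀ z : Fin 5, z + 1 = (z + 3) - 2) i) hal1')
      obtain ⟨al0m, hal0m', Eym_al0m⟩ := hym.2.2.2.2.2.1
      have hal0m : al0m ∈ A (i + 0) := (memA_congr ((by decide : ∀ z : Fin 5, z + 0 = (z + 3) + 2) i) hal0m')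
      obtain ⟨al4, hal4', Eyp_al4⟩ := hyp.2.2.2.2.2.1
      have hal4 : al4 ∈ A (i + 4) := (memA_congr ((by decide : ∀ z : Fin 5, z + 4 = (z + 2) + 2) i) hal4')
      obtain ⟨al0p, hal0p', Eyp_al0p⟩ := hyp.2.2.2.2.1
      have hal0p : al0p ∈ A (i + 0) := (memA_congr ((by decide : ∀ z : Fin 5, z + 0 = (z + 2) - 2) i) hal0p')
      obtain ⟨a0, ha0⟩ := hA.nonempty (i + 0)
      obtain ⟨a1, ha1⟩ := hA.nonempty (i + 1)
      obtain ⟨a4, ha4⟩ := hA.nonempty (i + 4)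
      rcases hym.2.2.2.2.2.2 with hcm | hcm
      · rcases hyp.2.2.2.2.2.2 with hcp | hcp
        · -- ms A1, ps A0
          exact hfree.2 (mk_gem a1 ym yp al4 al0m
            ((hcm a1 (memA_congr ((by decide : ∀ z : Fin 5, (z + 3) - 2 = z + 1) i) ha1))).symm
            (Eyp_ym).symm
            Eyp_al4
            (adjA hA ((by decide : ∀ z : Fin 5, z + 1 = (z + 0) + 1) i) hal0m ha1)
            (Eym_al0m).symm
            ((hcp al0m (memA_congr ((by decide : ∀ z : Fin 5, (z + 2) - 2 = z + 0) i) hal0m))).symm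
            (adjA hA ((by decide : ∀ z : Fin 5, z + 0 = (z + 4) + 1) i) hal4 hal0m).symm
            (fun hh => (Y_nadj_pred hyp ((by decide : ∀ z : Fin 5, z + 1 = (z + 2) - 1) i) ha1) hh.symm)
            (fun hh => (nadjA hA ((by decide : ∀ z : Fin 5, z + 1 = (z + 4) + 2) i) hal4 ha1) hh.symm)
            (Y_nadj_succ hym ((by decide : ∀ z : Fin 5, z + 4 = (z + 3) + 1) i) hal4)
            (Y_neA hyp ha1).symm
            (neA hA ((by decide : ∀ z : Fin 5, z + 1 ≠ z + 4) i) ha1 hal4)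
            (Y_neA hym hal4))
        · -- ms A1, ps A4
          by_cases HC1 : G.Adj x ym
          · -- adj case
            exact hfree.2 (mk_gem b2 a3 ym al0m x
              (adjA hA ((by decide : ∀ z : Fin 5, z + 3 = (z + 2) + 1) i) hb2 ha3)
              (Y_adj hym ((by decide : ∀ z : Fin 5, z + 3 = z + 3) i) ha3).symm
              Eym_al0m
              Ex_b2
              (hc3 a3 (memA_congr ((by decide : ∀ z : Fin 5, z - 2 = z + 3) i) ha3))
              HC1
              (Y_adj hx ((by decide : ∀ z : Fin 5, z + 0 = z) i) hal0m)
              (fun hh => (Y_nadj_pred hym ((by decide : ∀ z : Fin 5, z + 2 = (z + 3) - 1) i) hb2) hh.symm)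
              (fun hh => (nadjA hA ((by decide : ∀ z : Fin 5, z + 2 = (z + 0) + 2) i) hal0m hb2) hh.symm)
              (nadjA hA ((by decide : ∀ z : Fin 5, z + 0 = (z + 3) + 2) i) ha3 hal0m)
              (Y_neA hym hb2).symm
              (neA hA ((by decide : ∀ z : Fin 5, z + 2 ≠ z + 0) i) hb2 hal0m)
              (neA hA ((by decide : ∀ z : Fin 5, z + 3 ≠ z + 0) i) ha3 hal0m))
          · -- nonadj case
            by_cases HC2 : G.Adj x yp
            · -- adj case
              exact hfree.2 (mk_gem b2 x al0p a4 yp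
                (Ex_b2).symm
                (Y_adj hx ((by decide : ∀ z : Fin 5, z + 0 = z) i) hal0p)
                (adjA hA ((by decide : ∀ z : Fin 5, z + 0 = (z + 4) + 1) i) ha4 hal0p).symm
                (Y_adj hyp ((by decide : ∀ z : Fin 5, z + 2 = z + 2) i) hb2)
                (HC2).symm
                Eyp_al0p
                (hcp a4 (memA_congr ((by decide : ∀ z : Fin 5, (z + 2) + 2 = z + 4) i) ha4))
                (fun hh => (nadjA hA ((by decide : ∀ z : Fin 5, z + 2 = (z + 0) + 2) i) hal0p hb2) hh.symm)
                (nadjA hA ((by decide : ∀ z : Fin 5, z + 4 = (z + 2) + 2) i) hb2 ha4)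
                (Y_nadj_pred hx ((by decide : ∀ z : Fin 5, z + 4 = (z) - 1) i) ha4)
                (neA hA ((by decide : ∀ z : Fin 5, z + 2 ≠ z + 0) i) hb2 hal0p)
                (neA hA ((by decide : ∀ z : Fin 5, z + 2 ≠ z + 4) i) hb2 ha4)
                (Y_neA hx ha4))
            · -- nonadj case
              by_cases HC3 : G.Adj a0 ym
              · -- adj case
                by_cases HC4 : G.Adj al0p ym
                · -- adj case
                  exact hfree.2 (mk_gem a1 ym yp a4 al0p
                    ((hcm a1 (memA_congr ((by decide : ∀ z : Fin 5, (z + 3) - 2 = z + 1) i) ha1))).symm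
                    (Eyp_ym).symm
                    (hcp a4 (memA_congr ((by decide : ∀ z : Fin 5, (z + 2) + 2 = z + 4) i) ha4))
                    (adjA hA ((by decide : ∀ z : Fin 5, z + 1 = (z + 0) + 1) i) hal0p ha1)
                    HC4
                    (Eyp_al0p).symm
                    (adjA hA ((by decide : ∀ z : Fin 5, z + 0 = (z + 4) + 1) i) ha4 hal0p).symm
                    (fun hh => (Y_nadj_pred hyp ((by decide : ∀ z : Fin 5, z + 1 = (z + 2) - 1) i) ha1) hh.symm)
                    (fun hh => (nadjA hA ((by decide : ∀ z : Fin 5, z + 1 = (z + 4) + 2) i) ha4 ha1) hh.symm)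
                    (Y_nadj_succ hym ((by decide : ∀ z : Fin 5, z + 4 = (z + 3) + 1) i) ha4)
                    (Y_neA hyp ha1).symm
                    (neA hA ((by decide : ∀ z : Fin 5, z + 1 ≠ z + 4) i) ha1 ha4)
                    (Y_neA hym ha4))
                · -- nonadj case
                  by_cases HC5 : G.Adj a0 yp
                  · -- adj case
                    exact hfree.2 (mk_gem a1 ym yp a4 a0
                      ((hcm a1 (memA_congr ((by decide : ∀ z : Fin 5, (z + 3) - 2 = z + 1) i) ha1))).symm
                      (Eyp_ym).symm
                      (hcp a4 (memA_congr ((by decide : ∀ z : Fin 5, (z + 2) + 2 = z + 4) i) ha4))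
                      (adjA hA ((by decide : ∀ z : Fin 5, z + 1 = (z + 0) + 1) i) ha0 ha1)
                      HC3
                      HC5
                      (adjA hA ((by decide : ∀ z : Fin 5, z + 0 = (z + 4) + 1) i) ha4 ha0).symm
                      (fun hh => (Y_nadj_pred hyp ((by decide : ∀ z : Fin 5, z + 1 = (z + 2) - 1) i) ha1) hh.symm)
                      (fun hh => (nadjA hA ((by decide : ∀ z : Fin 5, z + 1 = (z + 4) + 2) i) ha4 ha1) hh.symm)
                      (Y_nadj_succ hym ((by decide : ∀ z : Fin 5, z + 4 = (z + 3) + 1) i) ha4)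
                      (Y_neA hyp ha1).symm
                      (neA hA ((by decide : ∀ z : Fin 5, z + 1 ≠ z + 4) i) ha1 ha4)
                      (Y_neA hym ha4))
                  · -- nonadj case
                    exact hfree.1 (mk_p5 x a0 ym yp a
                      (Y_adj hx ((by decide : ∀ z : Fin 5, z + 0 = z) i) ha0)
                      HC3
                      (Eyp_ym).symm
                      (Y_adj hyp ((by decide : ∀ z : Fin 5, z + 2 = z + 2) i) ha)
                      HC1
                      HC2
                      hax
                      HC5
                      (nadjA hA ((by decide : ∀ z : Fin 5, z + 2 = (z + 0) + 2) i) ha0 ha)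
                      (Y_nadj_pred hym ((by decide : ∀ z : Fin 5, z + 2 = (z + 3) - 1) i) ha)
                      (ne_adj_nadj (Eyp_ym).symm HC2).symm
                      (ne_adj_nadj Eyp_ym HC1).symm
                      (Y_neA hx ha)
                      (Y_neA hyp ha0).symm
                      (neA hA ((by decide : ∀ z : Fin 5, z + 0 ≠ z + 2) i) ha0 ha)
                      (Y_neA hym ha))
              · -- nonadj case
                by_cases HC6 : G.Adj al0p ym
                · -- adj case
                  exact hfree.2 (mk_gem a1 ym yp a4 al0p
                    ((hcm a1 (memA_congr ((by decide : ∀ z : Fin 5, (z + 3) - 2 = z + 1) i) ha1))).symm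
                    (Eyp_ym).symm
                    (hcp a4 (memA_congr ((by decide : ∀ z : Fin 5, (z + 2) + 2 = z + 4) i) ha4))
                    (adjA hA ((by decide : ∀ z : Fin 5, z + 1 = (z + 0) + 1) i) hal0p ha1)
                    HC6
                    (Eyp_al0p).symm
                    (adjA hA ((by decide : ∀ z : Fin 5, z + 0 = (z + 4) + 1) i) ha4 hal0p).symm
                    (fun hh => (Y_nadj_pred hyp ((by decide : ∀ z : Fin 5, z + 1 = (z + 2) - 1) i) ha1) hh.symm)
                    (fun hh => (nadjA hA ((by decide : ∀ z : Fin 5, z + 1 = (z + 4) + 2) i) ha4 ha1) hh.symm)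
                    (Y_nadj_succ hym ((by decide : ∀ z : Fin 5, z + 4 = (z + 3) + 1) i) ha4)
                    (Y_neA hyp ha1).symm
                    (neA hA ((by decide : ∀ z : Fin 5, z + 1 ≠ z + 4) i) ha1 ha4)
                    (Y_neA hym ha4))
                · -- nonadj case
                  by_cases HC7 : G.Adj a0 yp
                  · -- adj case
                    by_cases HC8 : G.Adj al0m yp
                    · -- adj case
                      exact hfree.2 (mk_gem a1 ym yp a4 al0m
                        ((hcm a1 (memA_congr ((by decide : ∀ z : Fin 5, (z + 3) - 2 = z + 1) i) ha1))).symm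
                        (Eyp_ym).symm
                        (hcp a4 (memA_congr ((by decide : ∀ z : Fin 5, (z + 2) + 2 = z + 4) i) ha4))
                        (adjA hA ((by decide : ∀ z : Fin 5, z + 1 = (z + 0) + 1) i) hal0m ha1)
                        (Eym_al0m).symm
                        HC8
                        (adjA hA ((by decide : ∀ z : Fin 5, z + 0 = (z + 4) + 1) i) ha4 hal0m).symm
                        (fun hh => (Y_nadj_pred hyp ((by decide : ∀ z : Fin 5, z + 1 = (z + 2) - 1) i) ha1) hh.symm)
                        (fun hh => (nadjA hA ((by decide : ∀ z : Fin 5, z + 1 = (z + 4) + 2) i) ha4 ha1) hh.symm)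
                        (Y_nadj_succ hym ((by decide : ∀ z : Fin 5, z + 4 = (z + 3) + 1) i) ha4)
                        (Y_neA hyp ha1).symm
                        (neA hA ((by decide : ∀ z : Fin 5, z + 1 ≠ z + 4) i) ha1 ha4)
                        (Y_neA hym ha4))
                    · -- nonadj case
                      exact hfree.1 (mk_p5 x al0m ym yp a
                        (Y_adj hx ((by decide : ∀ z : Fin 5, z + 0 = z) i) hal0m)
                        (Eym_al0m).symm
                        (Eyp_ym).symm
                        (Y_adj hyp ((by decide : ∀ z : Fin 5, z + 2 = z + 2) i) ha)
                        HC1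
                        HC2
                        hax
                        HC8
                        (nadjA hA ((by decide : ∀ z : Fin 5, z + 2 = (z + 0) + 2) i) hal0m ha)
                        (Y_nadj_pred hym ((by decide : ∀ z : Fin 5, z + 2 = (z + 3) - 1) i) ha)
                        (ne_adj_nadj (Eyp_ym).symm HC2).symm
                        (ne_adj_nadj Eyp_ym HC1).symm
                        (Y_neA hx ha)
                        (Y_neA hyp hal0m).symm
                        (neA hA ((by decide : ∀ z : Fin 5, z + 0 ≠ z + 2) i) hal0m ha)
                        (Y_neA hym ha))
                  · -- nonadj case
                    exact hfree.1 (mk_p5 x a0 a1 ym yp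
                      (Y_adj hx ((by decide : ∀ z : Fin 5, z + 0 = z) i) ha0)
                      (adjA hA ((by decide : ∀ z : Fin 5, z + 1 = (z + 0) + 1) i) ha0 ha1)
                      ((hcm a1 (memA_congr ((by decide : ∀ z : Fin 5, (z + 3) - 2 = z + 1) i) ha1))).symm
                      (Eyp_ym).symm
                      (Y_nadj_succ hx ((by decide : ∀ z : Fin 5, z + 1 = (z) + 1) i) ha1)
                      HC1
                      HC2
                      HC3
                      HC7
                      (fun hh => (Y_nadj_pred hyp ((by decide : ∀ z : Fin 5, z + 1 = (z + 2) - 1) i) ha1) hh.symm)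
                      (Y_neA hx ha1)
                      (ne_adj_nadj (Eyp_ym).symm HC2).symm
                      (ne_adj_nadj Eyp_ym HC1).symm
                      (Y_neA hym ha0).symm
                      (Y_neA hyp ha0).symm
                      (Y_neA hyp ha1).symm)
      · rcases hyp.2.2.2.2.2.2 with hcp | hcp
        · -- ms A0, ps A0
          exact hfree.2 (mk_gem al1 ym yp al4 a0
            (Eym_al1).symm
            (Eyp_ym).symm
            Eyp_al4
            (adjA hA ((by decide : ∀ z : Fin 5, z + 1 = (z + 0) + 1) i) ha0 hal1)
            ((hcm a0 (memA_congr ((by decide : ∀ z : Fin 5, (z + 3) + 2 = z + 0) i) ha0))).symm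
            ((hcp a0 (memA_congr ((by decide : ∀ z : Fin 5, (z + 2) - 2 = z + 0) i) ha0))).symm
            (adjA hA ((by decide : ∀ z : Fin 5, z + 0 = (z + 4) + 1) i) hal4 ha0).symm
            (fun hh => (Y_nadj_pred hyp ((by decide : ∀ z : Fin 5, z + 1 = (z + 2) - 1) i) hal1) hh.symm)
            (fun hh => (nadjA hA ((by decide : ∀ z : Fin 5, z + 1 = (z + 4) + 2) i) hal4 hal1) hh.symm)
            (Y_nadj_succ hym ((by decide : ∀ z : Fin 5, z + 4 = (z + 3) + 1) i) hal4)
            (Y_neA hyp hal1).symm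
            (neA hA ((by decide : ∀ z : Fin 5, z + 1 ≠ z + 4) i) hal1 hal4)
            (Y_neA hym hal4))
        · -- ms A0, ps A4
          exact hfree.2 (mk_gem a4 yp ym al1 al0p
            ((hcp a4 (memA_congr ((by decide : ∀ z : Fin 5, (z + 2) + 2 = z + 4) i) ha4))).symm
            Eyp_ym
            Eym_al1
            (adjA hA ((by decide : ∀ z : Fin 5, z + 0 = (z + 4) + 1) i) ha4 hal0p).symm
            (Eyp_al0p).symm
            ((hcm al0p (memA_congr ((by decide : ∀ z : Fin 5, (z + 3) + 2 = z + 0) i) hal0p))).symm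
            (adjA hA ((by decide : ∀ z : Fin 5, z + 1 = (z + 0) + 1) i) hal0p hal1)
            (fun hh => (Y_nadj_succ hym ((by decide : ∀ z : Fin 5, z + 4 = (z + 3) + 1) i) ha4) hh.symm)
            (nadjA hA ((by decide : ∀ z : Fin 5, z + 1 = (z + 4) + 2) i) ha4 hal1)
            (Y_nadj_pred hyp ((by decide : ∀ z : Fin 5, z + 1 = (z + 2) - 1) i) hal1)
            (Y_neA hym ha4).symm
            (neA hA ((by decide : ∀ z : Fin 5, z + 4 ≠ z + 1) i) ha4 hal1)
            (Y_neA hyp hal1))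
    · exact hc2


lemma fLem {V : Type*} {G : SimpleGraph V} {A : Fin 5 → Set V} (hA : IsC5Partition G A)
    (hfree : P5GemFree G) (i : Fin 5) {x ym yp a : V} (hx : x ∈ Yset G A i)
    (hym : ym ∈ Yset G A (i + 3)) (hyp : yp ∈ Yset G A (i + 2)) (ha : a ∈ A (i + 0))
    (Nym_a : ¬ G.Adj ym a) (Nyp_a : ¬ G.Adj yp a) : False := by
  have pure := pureY hA hfree i hx hym hyp
  have P3 := pure.1
  have P2 := pure.2
  have Eyp_ym : G.Adj yp ym := adjYY hA hfree (i + 2) hyp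
    (Y_congr ((by decide : ∀ z : Fin 5, (z + 2) + 1 = z + 3) i) hym)
  obtain ⟨al0m, hal0m', Eym_al0m⟩ := hym.2.2.2.2.2.1
  have hal0m : al0m ∈ A (i + 0) := (memA_congr ((by decide : ∀ z : Fin 5, z + 0 = (z + 3) + 2) i) hal0m')
  obtain ⟨al0p, hal0p', Eyp_al0p⟩ := hyp.2.2.2.2.1
  have hal0p : al0p ∈ A (i + 0) := (memA_congr ((by decide : ∀ z : Fin 5, z + 0 = (z + 2) - 2) i) hal0p')
  obtain ⟨a1, ha1⟩ := hA.nonempty (i + 1)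
  obtain ⟨a2, ha2⟩ := hA.nonempty (i + 2)
  obtain ⟨a3, ha3⟩ := hA.nonempty (i + 3)
  obtain ⟨a4, ha4⟩ := hA.nonempty (i + 4)
  rcases hym.2.2.2.2.2.2 with hcm | hcm
  · rcases hyp.2.2.2.2.2.2 with hcp | hcp
    · exact Nyp_a (hcp a (memA_congr ((by decide : ∀ z : Fin 5, (z + 2) - 2 = z + 0) i) ha))
    ·
      by_cases HC1 : G.Adj x ym
      · -- adj case
        exact hfree.2 (mk_gem a2 a3 ym al0m x
          (adjA hA ((by decide : ∀ z : Fin 5, z + 3 = (z + 2) + 1) i) ha2 ha3)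
          (Y_adj hym ((by decide : ∀ z : Fin 5, z + 3 = z + 3) i) ha3).symm
          Eym_al0m
          (P2 a2 ha2)
          (P3 a3 (memA_congr ((by decide : ∀ z : Fin 5, z - 2 = z + 3) i) ha3))
          HC1
          (Y_adj hx ((by decide : ∀ z : Fin 5, z + 0 = z) i) hal0m)
          (fun hh => (Y_nadj_pred hym ((by decide : ∀ z : Fin 5, z + 2 = (z + 3) - 1) i) ha2) hh.symm)
          (fun hh => (nadjA hA ((by decide : ∀ z : Fin 5, z + 2 = (z + 0) + 2) i) hal0m ha2) hh.symm)
          (nadjA hA ((by decide : ∀ z : Fin 5, z + 0 = (z + 3) + 2) i) ha3 hal0m)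
          (Y_neA hym ha2).symm
          (neA hA ((by decide : ∀ z : Fin 5, z + 2 ≠ z + 0) i) ha2 hal0m)
          (neA hA ((by decide : ∀ z : Fin 5, z + 3 ≠ z + 0) i) ha3 hal0m))
      · -- nonadj case
        by_cases HC2 : G.Adj x yp
        · -- adj case
          exact hfree.2 (mk_gem a2 x al0p a4 yp
            ((P2 a2 ha2)).symm
            (Y_adj hx ((by decide : ∀ z : Fin 5, z + 0 = z) i) hal0p)
            (adjA hA ((by decide : ∀ z : Fin 5, z + 0 = (z + 4) + 1) i) ha4 hal0p).symm
            (Y_adj hyp ((by decide : ∀ z : Fin 5, z + 2 = z + 2) i) ha2)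
            (HC2).symm
            Eyp_al0p
            (hcp a4 (memA_congr ((by decide : ∀ z : Fin 5, (z + 2) + 2 = z + 4) i) ha4))
            (fun hh => (nadjA hA ((by decide : ∀ z : Fin 5, z + 2 = (z + 0) + 2) i) hal0p ha2) hh.symm)
            (nadjA hA ((by decide : ∀ z : Fin 5, z + 4 = (z + 2) + 2) i) ha2 ha4)
            (Y_nadj_pred hx ((by decide : ∀ z : Fin 5, z + 4 = (z) - 1) i) ha4)
            (neA hA ((by decide : ∀ z : Fin 5, z + 2 ≠ z + 0) i) ha2 hal0p)
            (neA hA ((by decide : ∀ z : Fin 5, z + 2 ≠ z + 4) i) ha2 ha4)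
            (Y_neA hx ha4))
        · -- nonadj case
          exact hfree.1 (mk_p5 x a a1 ym yp
            (hx.2.1 a (memA_congr ((by decide : ∀ z : Fin 5, z = z + 0) i) ha))
            (adjA hA ((by decide : ∀ z : Fin 5, z + 1 = (z + 0) + 1) i) ha ha1)
            ((hcm a1 (memA_congr ((by decide : ∀ z : Fin 5, (z + 3) - 2 = z + 1) i) ha1))).symm
            (Eyp_ym).symm
            (Y_nadj_succ hx ((by decide : ∀ z : Fin 5, z + 1 = (z) + 1) i) ha1)
            HC1
            HC2
            (fun hh => Nym_a hh.symm)
            (fun hh => Nyp_a hh.symm)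
            (fun hh => (Y_nadj_pred hyp ((by decide : ∀ z : Fin 5, z + 1 = (z + 2) - 1) i) ha1) hh.symm)
            (Y_neA hx ha1)
            (ne_adj_nadj (Eyp_ym).symm HC2).symm
            (ne_adj_nadj Eyp_ym HC1).symm
            (Y_neA hym ha).symm
            (Y_neA hyp ha).symm
            (Y_neA hyp ha1).symm)
  · exact Nym_a (hcm a (memA_congr ((by decide : ∀ z : Fin 5, (z + 3) + 2 = z + 0) i) ha))

/-- Claim 2.7 (d)-(f): suppose `Y (i-2)` and `Y (i+2)` are both non-empty, and let
`A⁻ = N(Y (i-2)) ∩ A i` and `A⁺ = N(Y (i+2)) ∩ A i`. Then (d) `Y (i-1) ∪ Y (i+1) = ∅`;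
(e) every vertex of `Y i` is pure; (f) one of `A i \ (A⁻ ∪ A⁺)` and `Y i` is empty. -/
theorem two_ysets_def {V : Type*} [Fintype V] (G : SimpleGraph V)
    (hconn : G.Connected) (hfree : P5GemFree G)
    (hC5 : Nonempty (SimpleGraph.cycleGraph 5 ↪g G))
    (A : Fin 5 → Set V) (hA : IsC5Partition G A)
    (hmax : ∀ B : Fin 5 → Set V, IsC5Partition G B → ¬ (⋃ i, A i) ⊂ (⋃ i, B i))
    (i : Fin 5)
    (hm : (Yset G A (i - 2)).Nonempty) (hp : (Yset G A (i + 2)).Nonempty)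
    (Am Ap : Set V)
    (hAm : Am = {a | a ∈ A i ∧ ∃ y ∈ Yset G A (i - 2), G.Adj y a})
    (hAp : Ap = {a | a ∈ A i ∧ ∃ y ∈ Yset G A (i + 2), G.Adj y a}) :
    (Yset G A (i - 1) = ∅ ∧ Yset G A (i + 1) = ∅) ∧
      (∀ x ∈ Yset G A i, IsPureVertex G A i x) ∧
      (A i \ (Am ∪ Ap) = ∅ ∨ Yset G A i = ∅) := by
  obtain ⟨ym, hym0⟩ := hm
  obtain ⟨yp, hyp0⟩ := hp
  have hym : ym ∈ Yset G A (i + 3) :=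
    Y_congr ((by decide : ∀ z : Fin 5, z + 3 = z - 2) i) hym0
  refine ⟨⟨?_, ?_⟩, ?_, ?_⟩
  · rw [Set.eq_empty_iff_forall_notMem]
    intro z hz
    exact noYYY hA hfree (i + 2) hyp0
      (Y_congr ((by decide : ∀ z : Fin 5, (z + 2) + 1 = z + 3) i) hym)
      (Y_congr ((by decide : ∀ z : Fin 5, (z + 2) + 2 = z - 1) i) hz)
  · rw [Set.eq_empty_iff_forall_notMem]
    intro z hz
    exact noYYY hA hfree (i + 1) hz
      (Y_congr ((by decide : ∀ z : Fin 5, (z + 1) + 1 = z + 2) i) hyp0)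
      (Y_congr ((by decide : ∀ z : Fin 5, (z + 1) + 2 = z + 3) i) hym)
  · intro x hx
    exact pureY hA hfree i hx hym hyp0
  · by_cases hY : Yset G A i = ∅
    · exact Or.inr hY
    · left
      rw [Set.eq_empty_iff_forall_notMem]
      intro a haa
      obtain ⟨x, hx⟩ := Set.nonempty_iff_ne_empty.2 hY
      have haA : a ∈ A i := haa.1
      have hnot := haa.2
      have h1 : ¬ G.Adj ym a := fun hadj =>
        hnot (Set.mem_union_left _ (by rw [hAm]; exact ⟨haA, ym, hym0, hadj⟩))
      have h2 : ¬ G.Adj yp a := fun hadj =>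
        hnot (Set.mem_union_right _ (by rw [hAp]; exact ⟨haA, yp, hyp0, hadj⟩))
      exact fLem hA hfree i hx hym hyp0
        (memA_congr ((by decide : ∀ z : Fin 5, z + 0 = z) i) haA) h1 h2
end
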